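/- arXiv:1311.4188 — 6 statements merged into one kernel-verified Lean document; each statement's English description precedes it below -/
import Mathlib

section
/- Let $k_0, w > 0$ and $\xi \in \mathbb{C}$. Suppose $u(x) = A e^{i k_0 \mu x} + B e^{-i k_0 \mu x}$ with $\mu \neq 0$, $(A,B) \neq (0,0)$, satisfies the boundary conditions $u'(-w/2) + i k_0 \xi u(-w/2) = 0$ and $u'(w/2) - i k_0 \xi u(w/2) = 0$. Then $B = \sigma A$ with $\sigma \in \{1,-1\}$ and $e^{i \mu k_0 w} = \sigma \frac{\mu + \xi}{\mu - \xi}$ (in particular $\mu \neq \xi$). -/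
open Complex Real

theorem stmt_0 (k0 w : ℝ) (hk0 : 0 < k0) (hw : 0 < w)
    (ξ μ A B : ℂ) (hμ : μ ≠ 0) (hAB : ¬ (A = 0 ∧ B = 0))
    (u : ℝ → ℂ)
    (hu : ∀ x : ℝ, u x = A * Complex.exp (Complex.I * k0 * μ * x) +
      B * Complex.exp (-(Complex.I * k0 * μ * x)))
    (hbc1 : deriv u (-(w/2)) + Complex.I * k0 * ξ * u (-(w/2)) = 0)
    (hbc2 : deriv u (w/2) - Complex.I * k0 * ξ * u (w/2) = 0) :
    ∃ σ : ℂ, (σ = 1 ∨ σ = -1) ∧ B = σ * A ∧ μ ≠ ξ ∧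
      Complex.exp (Complex.I * μ * k0 * w) = σ * (μ + ξ) / (μ - ξ) := by
  have hufun : u = fun x : ℝ => A * Complex.exp (Complex.I * k0 * μ * x) +
      B * Complex.exp (-(Complex.I * k0 * μ * x)) := funext hu
  subst hufun
  set c : ℂ := Complex.I * (k0 : ℂ) * μ with hc
  have hderiv : ∀ x : ℝ, deriv (fun x : ℝ => A * Complex.exp (c * x) +
      B * Complex.exp (-(c * x))) x
      = c * A * Complex.exp (c * x) - c * B * Complex.exp (-(c * x)) := by
    intro x
    have h1 : HasDerivAt (fun y : ℝ => (y : ℂ)) 1 x := by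
      simpa using (hasDerivAt_id x).ofReal_comp
    have h2 : HasDerivAt (fun y : ℝ => c * (y : ℂ)) c x := by
      simpa using h1.const_mul c
    have h3 : HasDerivAt (fun y : ℝ => Complex.exp (c * y))
        (Complex.exp (c * x) * c) x := h2.cexp
    have h4 : HasDerivAt (fun y : ℝ => Complex.exp (-(c * y)))
        (Complex.exp (-(c * x)) * (-c)) x := by
      simpa using h2.neg.cexp
    have h5 := (h3.const_mul A).add (h4.const_mul B)
    rw [(show HasDerivAt (fun y : ℝ => A * Complex.exp (c * y) + B * Complex.exp (-(c * y))) _ x from h5).deriv]; ring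
  simp only [hderiv] at hbc1 hbc2
  have hneg : ((-(w / 2) : ℝ) : ℂ) = -(((w / 2 : ℝ) : ℂ)) := by push_cast; ring
  rw [hneg, mul_neg, neg_neg] at hbc1
  set E : ℂ := Complex.exp (c * ((w / 2 : ℝ) : ℂ)) with hE
  set En : ℂ := Complex.exp (-(c * ((w / 2 : ℝ) : ℂ))) with hEn
  have hEmul : E * En = 1 := by
    rw [hE, hEn, ← Complex.exp_add]; simp
  have hk0' : (k0 : ℂ) ≠ 0 := by exact_mod_cast hk0.ne'
  have hIk0 : Complex.I * (k0 : ℂ) ≠ 0 := mul_ne_zero Complex.I_ne_zero hk0'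
  have eq2 : A * E ^ 2 * (μ - ξ) = B * (μ + ξ) := by
    apply mul_left_cancel₀ hIk0
    linear_combination E * hbc2 + Complex.I * (k0 : ℂ) * B * (μ + ξ) * hEmul
  have eq1 : A * (μ + ξ) = B * E ^ 2 * (μ - ξ) := by
    apply mul_left_cancel₀ hIk0
    linear_combination E * hbc1 - Complex.I * (k0 : ℂ) * A * (μ + ξ) * hEmul
  have hE2 : E ^ 2 ≠ 0 := pow_ne_zero _ (Complex.exp_ne_zero _)
  -- μ ≠ ξ
  have hμξ : μ ≠ ξ := by
    intro h
    rw [h] at eq1 eq2 hμ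
    have h2ξ : ξ + ξ ≠ 0 := by
      rw [← two_mul]; exact mul_ne_zero two_ne_zero hμ
    have hB0 : B = 0 := by
      have h2 : B * (ξ + ξ) = 0 := by linear_combination -eq2
      exact (mul_eq_zero.mp h2).resolve_right h2ξ
    have hA0 : A = 0 := by
      have h2 : A * (ξ + ξ) = 0 := by linear_combination eq1 + E ^ 2 * (ξ - ξ) * hB0
      exact (mul_eq_zero.mp h2).resolve_right h2ξ
    exact hAB ⟨hA0, hB0⟩
  have hμmξ : μ - ξ ≠ 0 := sub_ne_zero.mpr hμξ
  -- μ + ξ ≠ 0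
  have hsum : μ + ξ ≠ 0 := by
    intro h
    have hdiff : μ - ξ = 2 * μ := by linear_combination -h
    have h2μ : (2 : ℂ) * μ ≠ 0 := mul_ne_zero two_ne_zero hμ
    have hB0 : B = 0 := by
      have h2 : B * (E ^ 2 * (μ - ξ)) = 0 := by linear_combination -eq1 + A * h
      have := (mul_eq_zero.mp h2).resolve_right
        (mul_ne_zero hE2 (hdiff ▸ h2μ))
      exact this
    have hA0 : A = 0 := by
      have h2 : A * (E ^ 2 * (μ - ξ)) = 0 := by linear_combination eq2 + (μ + ξ) * hB0
      exact (mul_eq_zero.mp h2).resolve_right (mul_ne_zero hE2 (hdiff ▸ h2μ))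
    exact hAB ⟨hA0, hB0⟩
  -- A ≠ 0
  have hA : A ≠ 0 := by
    intro h
    have hB0 : B = 0 := by
      have h2 : B * (μ + ξ) = 0 := by linear_combination -eq2 + E ^ 2 * (μ - ξ) * h
      exact (mul_eq_zero.mp h2).resolve_right hsum
    exact hAB ⟨h, hB0⟩
  set σ : ℂ := B * A⁻¹ with hσ
  have hB : B = σ * A := by
    rw [hσ, mul_assoc, inv_mul_cancel₀ hA, mul_one]
  have hσ2 : σ ^ 2 = 1 := by
    apply mul_right_cancel₀ (mul_ne_zero hA hsum)
    linear_combination (-σ) * eq2 - eq1 - (σ * (μ + ξ) + E ^ 2 * (μ - ξ)) * hB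
  have hσ1 : σ = 1 ∨ σ = -1 := by
    have h0 : (σ - 1) * (σ + 1) = 0 := by linear_combination hσ2
    rcases mul_eq_zero.mp h0 with h | h
    · left; exact sub_eq_zero.mp h
    · right; linear_combination h
  refine ⟨σ, hσ1, hB, hμξ, ?_⟩
  have hEsq : Complex.exp (Complex.I * μ * (k0 : ℂ) * (w : ℂ)) = E ^ 2 := by
    rw [sq, ← Complex.exp_add]
    congr 1
    rw [hc]
    push_cast
    ring
  rw [hEsq, eq_div_iff hμmξ]
  apply mul_left_cancel₀ hA
  linear_combination eq2 + (μ + ξ) * hB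
end

section
/- As $\chi \to 0$ in $\mathbb{C}$, the solution $\alpha_0$ of $\alpha_0 \tan(\alpha_0/2) = -i\chi^2$ with $\alpha_0 \sim (1-i)\chi$ admits the expansion $\alpha_0 = (1-i)\left(\chi + \frac{i}{12}\chi^3\right) + O(\chi^5)$. -/
open Complex Filter Asymptotics


lemma hE_O : (fun z : ℂ => Complex.exp z - (1 + z + z^2/2 + z^3/6 + z^4/24))
    =O[nhds (0:ℂ)] fun z => z^5 := by
  rw [isBigO_iff]
  refine ⟨6 * ((120:ℝ)*5)⁻¹, ?_⟩
  filter_upwards [Metric.closedBall_mem_nhds (0:ℂ) one_pos] with z hz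
  have hz1 : ‖z‖ ≤ 1 := by
    simpa [Complex.dist_eq] using Metric.mem_closedBall.1 hz
  have h := Complex.exp_bound hz1 (n := 5) (by norm_num)
  have hs : (∑ m ∈ Finset.range 5, z ^ m / m.factorial) = 1 + z + z^2/2 + z^3/6 + z^4/24 := by
    rw [Finset.sum_range_succ, Finset.sum_range_succ, Finset.sum_range_succ,
      Finset.sum_range_succ, Finset.sum_range_succ]
    norm_num [Nat.factorial]
  rw [hs] at h
  rw [norm_pow]
  refine h.trans (le_of_eq ?_)
  norm_num [Nat.factorial]
  ring


lemma pow5_comp (c : ℂ) (hc : ‖c‖ = 1) :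
    (fun z : ℂ => (z * c)^5) =O[nhds (0:ℂ)] fun z => z^5 := by
  rw [isBigO_iff]
  exact ⟨1, Eventually.of_forall fun z => by
    simp [map_pow, map_mul, hc]⟩

lemma hE_comp (c : ℂ) (hc : ‖c‖ = 1) :
    (fun z : ℂ => Complex.exp (z*c) - (1 + z*c + (z*c)^2/2 + (z*c)^3/6 + (z*c)^4/24))
      =O[nhds (0:ℂ)] fun z => z^5 := by
  have ht : Tendsto (fun z : ℂ => z * c) (nhds 0) (nhds 0) := by
    simpa using (continuous_mul_right c).tendsto (0:ℂ)
  exact (hE_O.comp_tendsto ht).trans (pow5_comp c hc)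

lemma sin_O : (fun z : ℂ => Complex.sin z - (z - z^3/6)) =O[nhds (0:ℂ)] fun z => z^5 := by
  have h1 := hE_comp (-I) (by simp)
  have h2 := hE_comp I (by simp)
  have h := (h1.sub h2).const_mul_left (I/2)
  refine (h.congr_left fun z => ?_).trans (isBigO_refl _ _)
  have a := Complex.exp_mul_I z
  have b := Complex.exp_mul_I (-z)
  rw [Complex.sin_neg, Complex.cos_neg] at b
  have hb : Complex.exp (z * -I) = Complex.cos z + -Complex.sin z * I := by
    rw [show z * -I = -z * I by ring]; exact b
  linear_combination (I/2) * hb - (I/2) * a +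
    (-Complex.sin z + z + z^3*(Complex.I^2-1)/6) * Complex.I_sq

lemma cos_O : (fun z : ℂ => Complex.cos z - (1 - z^2/2 + z^4/24)) =O[nhds (0:ℂ)] fun z => z^5 := by
  have h1 := hE_comp I (by simp)
  have h2 := hE_comp (-I) (by simp)
  have h := (h1.add h2).const_mul_left (1/2)
  refine (h.congr_left fun z => ?_).trans (isBigO_refl _ _)
  have a := Complex.exp_mul_I z
  have b := Complex.exp_mul_I (-z)
  rw [Complex.sin_neg, Complex.cos_neg] at b
  have hb : Complex.exp (z * -I) = Complex.cos z + -Complex.sin z * I := by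
    rw [show z * -I = -z * I by ring]; exact b
  linear_combination (1/2) * a + (1/2) * hb +
    (-z^2/2 - z^4*(Complex.I^2-1)/24) * Complex.I_sq


lemma num_O : (fun z : ℂ => Complex.sin z - (z + z^3/3) * Complex.cos z)
    =O[nhds (0:ℂ)] fun z => z^5 := by
  have hbd : (fun z : ℂ => z + z^3/3) =O[nhds (0:ℂ)] (fun _ => (1:ℂ)) :=
    ((Continuous.tendsto (by fun_prop) 0) : Tendsto (fun z : ℂ => z + z^3/3) (nhds 0) _).isBigO_one (F := ℂ)
  have hQbd : (fun z : ℂ => 1/8 - z^2/72) =O[nhds (0:ℂ)] (fun _ => (1:ℂ)) :=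
    ((Continuous.tendsto (by fun_prop) 0) : Tendsto (fun z : ℂ => 1/8 - z^2/72) (nhds 0) _).isBigO_one (F := ℂ)
  have hQ : (fun z : ℂ => z^5/8 - z^7/72) =O[nhds (0:ℂ)] fun z => z^5 := by
    have := (isBigO_refl (fun z : ℂ => z^5) (nhds 0)).mul hQbd
    refine (this.congr (fun z => by ring) (fun z => by ring))
  have hmul := (hbd.mul cos_O).congr_right (fun z => one_mul _)
  have h := (sin_O.sub hmul).add hQ
  refine (h.congr_left fun z => by ring).congr_right fun z => by ring

lemma tan_O : (fun z : ℂ => Complex.tan z - (z + z^3/3)) =O[nhds (0:ℂ)] fun z => z^5 := by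
  have hcos : ∀ᶠ z : ℂ in nhds 0, Complex.cos z ≠ 0 :=
    (Complex.continuous_cos.continuousAt).eventually_ne (by simp)
  have hinv : (fun z : ℂ => (Complex.cos z)⁻¹) =O[nhds (0:ℂ)] (fun _ => (1:ℂ)) := by
    have : Tendsto (fun z : ℂ => (Complex.cos z)⁻¹) (nhds 0) (nhds (Complex.cos 0)⁻¹) :=
      ((Complex.continuous_cos.tendsto 0).inv₀ (by simp))
    exact this.isBigO_one (F := ℂ)
  have h := (num_O.mul hinv).congr_right (fun z => mul_one _)
  refine h.congr' ?_ (EventuallyEq.refl _ _)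
  filter_upwards [hcos] with z hz
  rw [Complex.tan_eq_sin_div_cos]
  field_simp


local notation "l" => nhdsWithin (0:ℂ) {0}ᶜ

lemma cancel_chi {f : ℂ → ℂ} {n : ℕ} (h : (fun χ => χ * f χ) =O[l] fun χ => χ^(n+1)) :
    f =O[l] fun χ => χ^n := by
  obtain ⟨C, hC⟩ := isBigO_iff.1 h
  refine isBigO_iff.2 ⟨C, ?_⟩
  filter_upwards [hC, self_mem_nhdsWithin] with χ h1 h2
  have hχ : χ ≠ 0 := h2
  have hn : (0:ℝ) < ‖χ‖ := norm_pos_iff.2 hχ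
  rw [norm_mul] at h1
  rw [norm_pow] at h1 ⊢
  rw [pow_succ, mul_comm (‖χ‖^n)] at h1
  calc ‖f χ‖ = (‖χ‖ * ‖f χ‖) / ‖χ‖ := (mul_div_cancel_left₀ _ hn.ne').symm
    _ ≤ (C * (‖χ‖ * ‖χ‖^n)) / ‖χ‖ := by gcongr
    _ = C * ‖χ‖^n := by rw [mul_div_assoc, mul_div_cancel_left₀ _ hn.ne']

theorem stmt_3 (α₀ : ℂ → ℂ)
    (heq : ∀ᶠ χ in nhdsWithin (0 : ℂ) {0}ᶜ,
      α₀ χ * Complex.tan (α₀ χ / 2) = -Complex.I * χ ^ 2)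
    (hlead : (fun χ : ℂ => α₀ χ - (1 - Complex.I) * χ)
        =o[nhdsWithin (0 : ℂ) {0}ᶜ] fun χ : ℂ => χ) :
    (fun χ : ℂ => α₀ χ - (1 - Complex.I) * (χ + Complex.I / 12 * χ ^ 3))
      =O[nhdsWithin (0 : ℂ) {0}ᶜ] fun χ : ℂ => χ ^ 5 := by
  set β : ℂ → ℂ := fun χ => α₀ χ - (1 - I) * χ with hβdef
  have hα : α₀ =O[l] (fun χ : ℂ => χ) := by
    have h2 : (fun χ : ℂ => (1 - I) * χ) =O[l] (fun χ : ℂ => χ) :=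
      (isBigO_refl _ _).const_mul_left _
    exact (hlead.isBigO.add h2).congr_left fun χ => by simp [hβdef]
  have htend : Tendsto α₀ l (nhds 0) := by
    have h0 : Tendsto (fun χ : ℂ => χ) l (nhds 0) :=
      tendsto_id.mono_left nhdsWithin_le_nhds
    exact hα.trans_tendsto h0
  have htend2 : Tendsto (fun χ => α₀ χ / 2) l (nhds 0) := by
    simpa using htend.div_const 2
  have hrcomp : (fun χ => Complex.tan (α₀ χ / 2) - (α₀ χ / 2 + (α₀ χ / 2)^3/3))
      =O[l] fun χ => (α₀ χ / 2)^5 := tan_O.comp_tendsto htend2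
  have hα2 : (fun χ => α₀ χ / 2) =O[l] (fun χ : ℂ => χ) := by
    have := hα.const_mul_left ((2:ℂ)⁻¹)
    exact this.congr_left fun χ => by ring
  have hG : (fun χ => α₀ χ * Complex.tan (α₀ χ / 2) - (α₀ χ^2/2 + α₀ χ^4/24))
      =O[l] fun χ => χ^6 := by
    have h5 : (fun χ => (α₀ χ / 2)^5) =O[l] fun χ => χ^5 := hα2.pow 5
    have := hα.mul (hrcomp.trans h5)
    refine (this.congr_left fun χ => by ring).congr_right fun χ => by ring
  have hpow64 : (fun χ : ℂ => χ^6) =O[l] fun χ => χ^4 := by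
    refine IsBigO.mono ?_ nhdsWithin_le_nhds
    have hbd : (fun χ : ℂ => χ^2) =O[nhds (0:ℂ)] (fun _ => (1:ℂ)) :=
      (((continuous_pow 2).tendsto (0:ℂ))).isBigO_one (F := ℂ)
    have := (isBigO_refl (fun χ : ℂ => χ^4) (nhds 0)).mul hbd
    exact (this.congr_left fun χ => by ring).congr_right fun χ => by ring
  -- step 1 : key relation
  have key : (fun χ => 2*(1-I)*χ * β χ + β χ^2) =O[l] fun χ => χ^4 := by
    have hRHS : (fun χ => -(α₀ χ^4/12)
        - 2*(α₀ χ * Complex.tan (α₀ χ / 2) - (α₀ χ^2/2 + α₀ χ^4/24)))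
        =O[l] fun χ => χ^4 := by
      have h4 : (fun χ => α₀ χ^4) =O[l] fun χ => χ^4 := hα.pow 4
      have := (h4.const_mul_left (-(1/12):ℂ)).sub ((hG.trans hpow64).const_mul_left 2)
      exact this.congr_left fun χ => by ring
    refine hRHS.congr' ?_ (EventuallyEq.refl _ _)
    filter_upwards [heq] with χ h
    simp only [hβdef]
    linear_combination (-2:ℂ) * h + (χ^2) * Complex.I_sq
  -- β = O(χ^3)
  have hβ : β =O[l] fun χ => χ^3 := by
    have hlit : (fun χ => β χ^2) =o[l] (fun χ => 2*(1-I)*χ * β χ) := by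
      have h1 : (fun χ => β χ * β χ) =o[l] (fun χ => χ * β χ) :=
        hlead.mul_isBigO (isBigO_refl β _)
      have h2 : (fun χ => χ * β χ) =O[l] (fun χ => 2*(1-I)*χ * β χ) := by
        have := (isBigO_refl (fun χ => χ * β χ) l).const_mul_right
          (c := (2:ℂ)*(1-I)) (by
            intro h'
            have : (2:ℂ)*(1-I) ≠ 0 := by
              simp [Complex.ext_iff]
            exact this h')
        exact this.congr_right fun χ => by ring
      exact (h1.trans_isBigO h2).congr_left fun χ => by ring
    have hbig : (fun χ => 2*(1-I)*χ * β χ) =O[l] fun χ => χ^4 :=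
      hlit.right_isBigO_add.trans (key.congr_left fun χ => by ring)
    have hc : (fun χ => χ * β χ) =O[l] fun χ => χ^4 := by
      have := hbig.const_mul_left (((2:ℂ)*(1-I))⁻¹)
      refine this.congr_left fun χ => ?_
      have h0 : (2:ℂ)*(1-I) ≠ 0 := by simp [Complex.ext_iff]
      field_simp
      have h1 : (1:ℂ) - I ≠ 0 := by simp [Complex.ext_iff]
      linear_combination (χ * β χ) * mul_inv_cancel₀ h1
    exact cancel_chi (n := 3) hc
  -- step 2
  set δ : ℂ → ℂ := fun χ => β χ - (1+I)/12 * χ^3 with hδdef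
  have key2 : (fun χ => χ * δ χ) =O[l] fun χ => χ^6 := by
    have hβsq : (fun χ => β χ^2) =O[l] fun χ => χ^6 :=
      ((hβ.mul hβ).congr_left fun χ => by ring).congr_right fun χ => by ring
    have hcube : (fun χ => α₀ χ^3 + α₀ χ^2*((1-I)*χ) + α₀ χ*((1-I)*χ)^2 + ((1-I)*χ)^3)
        =O[l] fun χ => χ^3 := by
      have t1 : (fun χ => α₀ χ^3) =O[l] fun χ => χ^3 := hα.pow 3
      have t2 : (fun χ => α₀ χ^2*((1-I)*χ)) =O[l] fun χ => χ^3 := by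
        have := (hα.pow 2).mul ((isBigO_refl (fun χ : ℂ => χ) l).const_mul_left (1-I))
        exact (this.congr_left fun χ => rfl).congr_right fun χ => by ring
      have t3 : (fun χ => α₀ χ*((1-I)*χ)^2) =O[l] fun χ => χ^3 := by
        have := hα.mul (((isBigO_refl (fun χ : ℂ => χ) l).const_mul_left (1-I)).pow 2)
        exact (this.congr_left fun χ => rfl).congr_right fun χ => by ring
      have t4 : (fun χ : ℂ => ((1-I)*χ)^3) =O[l] fun χ => χ^3 := by
        have := ((isBigO_refl (fun χ : ℂ => χ) l).const_mul_left (1-I)).pow 3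
        exact this.congr_right fun χ => by ring
      exact ((t1.add t2).add t3).add t4
    have hfac : (fun χ => α₀ χ^4 + 4*χ^4) =O[l] fun χ => χ^6 := by
      have := hβ.mul hcube
      refine (this.congr_left fun χ => ?_).congr_right fun χ => by ring
      simp only [hβdef]
      linear_combination (-χ^4*(Complex.I^2 - 4*Complex.I + 5)) * Complex.I_sq
    have hG6 : (fun χ => α₀ χ * Complex.tan (α₀ χ / 2) - (α₀ χ^2/2 + α₀ χ^4/24))
        =O[l] fun χ => χ^6 := hG
    have hRHS : (fun χ => -(β χ^2)
        - 2*(α₀ χ * Complex.tan (α₀ χ / 2) - (α₀ χ^2/2 + α₀ χ^4/24))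
        - (α₀ χ^4 + 4*χ^4)/12) =O[l] fun χ => χ^6 := by
      have := (hβsq.const_mul_left (-1:ℂ)).sub (hG6.const_mul_left 2) |>.sub
        (hfac.const_mul_left ((1:ℂ)/12))
      exact this.congr_left fun χ => by ring
    have hbig : (fun χ => 2*(1-I)*χ * δ χ) =O[l] fun χ => χ^6 := by
      refine hRHS.congr' ?_ (EventuallyEq.refl _ _)
      filter_upwards [heq] with χ h
      simp only [hβdef, hδdef]
      linear_combination (-2:ℂ) * h + (χ^2 - χ^4/6) * Complex.I_sq
    have := hbig.const_mul_left (((2:ℂ)*(1-I))⁻¹)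
    refine this.congr_left fun χ => ?_
    have h0 : (2:ℂ)*(1-I) ≠ 0 := by simp [Complex.ext_iff]
    field_simp
    have h1 : (1:ℂ) - I ≠ 0 := by simp [Complex.ext_iff]
    linear_combination (χ * δ χ) * mul_inv_cancel₀ h1
  have hδ : δ =O[l] fun χ => χ^5 := by
    have h6 : (fun χ : ℂ => χ^6) = fun χ : ℂ => χ^(5+1) := by norm_num
    exact cancel_chi (n := 5) (h6 ▸ key2)
  refine hδ.congr_left fun χ => ?_
  simp only [hδdef, hβdef]
  linear_combination (-χ^3/12) * Complex.I_sq
end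

section
/- Fix $\tilde\xi \in \mathbb{C}$ in a bounded set. For $n \in \mathbb{N}^*$, the solution $\alpha_n$ of $(n\pi + \alpha_n)\tan(\alpha_n/2) = -i\tilde\xi$ with $\alpha_n \to 0$ as $n \to \infty$ satisfies $\alpha_n = -\frac{2i}{\pi}\frac{\tilde\xi}{n} + O(1/n^2)$ as $n \to \infty$. -/
open Complex Filter Asymptotics

lemma tanA : (fun z : ℂ => Complex.tan z - z) =O[nhds (0:ℂ)] fun z : ℂ => ‖z‖ ^ 2 := by
  have htan : AnalyticAt ℂ Complex.tan 0 := by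
    have h := (Complex.differentiable_sin.analyticAt 0).div
      (Complex.differentiable_cos.analyticAt 0) (by simp)
    have he : Complex.tan = fun z => Complex.sin z / Complex.cos z := by
      funext z; exact Complex.tan_eq_sin_div_cos z
    rwa [he]
  obtain ⟨p, hp⟩ := htan
  have h2 := hp.isBigO_sub_partialSum_pow 2
  have hc1 : p.coeff 1 = 1 := by
    have hd := hp.deriv
    have hder : deriv Complex.tan 0 = 1 := by
      have := (Complex.hasDerivAt_tan (by simp : Complex.cos 0 ≠ 0)).deriv
      rw [this]; simp
    rw [hder] at hd
    exact hd.symm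
  have hps : ∀ y : ℂ, p.partialSum 2 y = y := by
    intro y
    have h0 : p 0 (fun _ => y) = 0 := by
      have := hp.coeff_zero (fun _ => y)
      simpa using this
    have h1 : p 1 (fun _ => y) = y := by
      rw [FormalMultilinearSeries.apply_eq_pow_smul_coeff, hc1]
      simp
    have hc0 : p.coeff 0 = 0 := by
      have h := hp.coeff_zero (fun _ => (1:ℂ))
      rw [Complex.tan_zero] at h
      exact h
    simp [FormalMultilinearSeries.partialSum, Finset.sum_range_succ, h0, h1, hc0, hc1]
  have h3 : (fun y : ℂ => Complex.tan (0 + y) - p.partialSum 2 y) = fun y => Complex.tan y - y := by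
    funext y; rw [zero_add, hps]
  rwa [h3] at h2

set_option maxHeartbeats 1000000 in
theorem stmt_4 (ξt : ℂ) (α : ℕ → ℂ)
    (heq : ∀ n : ℕ, 1 ≤ n →
      ((n : ℂ) * Real.pi + α n) * Complex.tan (α n / 2) = -Complex.I * ξt)
    (hsmall : Tendsto α atTop (nhds 0)) :
    (fun n : ℕ => α n - (-(2 * Complex.I / Real.pi) * ξt / (n : ℂ)))
      =O[atTop] fun n : ℕ => (1 : ℝ) / (n : ℝ) ^ 2 := by
  have hπ : (0:ℝ) < Real.pi := Real.pi_pos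
  have hα2 : Tendsto (fun n => α n / 2) atTop (nhds 0) := by
    simpa using hsmall.div_const 2
  have hA : (fun n : ℕ => Complex.tan (α n / 2) - α n / 2) =O[atTop]
      fun n => ‖α n / 2‖ ^ 2 := tanA.comp_tendsto hα2
  obtain ⟨C0, hC0⟩ := hA.bound
  set C : ℝ := max C0 1 with hCdef
  have hCpos : (0:ℝ) < C := lt_of_lt_of_le one_pos (le_max_right _ _)
  have hC : ∀ᶠ n in atTop, ‖Complex.tan (α n / 2) - α n / 2‖ ≤ C * ‖α n / 2‖ ^ 2 := by
    filter_upwards [hC0] with n h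
    calc ‖Complex.tan (α n / 2) - α n / 2‖ ≤ C0 * ‖(‖α n / 2‖ ^ 2)‖ := h
      _ = C0 * ‖α n / 2‖ ^ 2 := by rw [Real.norm_of_nonneg (by positivity)]
      _ ≤ C * ‖α n / 2‖ ^ 2 := by
          apply mul_le_mul_of_nonneg_right (le_max_left _ _) (by positivity)
  have hεpos : (0:ℝ) < min 1 (1/C) := lt_min one_pos (by positivity)
  have hev : ∀ᶠ n in atTop, ‖α n‖ ≤ min 1 (1/C) := by
    have := hsmall.eventually (Metric.closedBall_mem_nhds (0:ℂ) hεpos)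
    simpa [Metric.mem_closedBall, dist_zero_right] using this
  rw [isBigO_iff]
  refine ⟨2*C*‖ξt‖^2 + 2*‖ξt‖^2, ?_⟩
  filter_upwards [hC, hev, eventually_ge_atTop 1] with n hCn hevn hn1
  have hn1' : (1:ℝ) ≤ (n:ℝ) := by exact_mod_cast hn1
  have hnpos : (0:ℝ) < (n:ℝ) := lt_of_lt_of_le one_pos hn1'
  set d : ℂ := (n : ℂ) * Real.pi + α n with hddef
  -- lower bound on ‖d‖
  have hnormnπ : ‖(n:ℂ) * (Real.pi:ℂ)‖ = (n:ℝ) * Real.pi := by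
    rw [norm_mul, Complex.norm_natCast, Complex.norm_real, Real.norm_of_nonneg hπ.le]
  have hα1 : ‖α n‖ ≤ 1 := le_trans hevn (min_le_left _ _)
  have hαC : ‖α n‖ ≤ 1/C := le_trans hevn (min_le_right _ _)
  have hdlb : 2 * (n:ℝ) ≤ ‖d‖ := by
    have h1 : ‖(n:ℂ) * (Real.pi:ℂ)‖ - ‖-(α n)‖ ≤ ‖(n:ℂ) * (Real.pi:ℂ) - -(α n)‖ :=
      norm_sub_norm_le _ _
    rw [sub_neg_eq_add, norm_neg, hnormnπ] at h1
    have hpi3 : (3:ℝ) < Real.pi := Real.pi_gt_three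
    nlinarith
  have hdpos : (0:ℝ) < ‖d‖ := lt_of_lt_of_le (by positivity) hdlb
  have hdne : d ≠ 0 := fun h => by simp [h] at hdpos
  have hnne : ((n:ℂ)) ≠ 0 := Nat.cast_ne_zero.mpr (by omega)
  have hπne : ((Real.pi : ℂ)) ≠ 0 := by
    simpa using Complex.ofReal_ne_zero.mpr hπ.ne'
  -- tan norm bound
  have htannorm : ‖Complex.tan (α n / 2)‖ ≤ ‖ξt‖ / (2 * (n:ℝ)) := by
    have h := heq n hn1
    have htan : Complex.tan (α n / 2) = -Complex.I * ξt / d := by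
      rw [eq_div_iff hdne, mul_comm]; exact h
    rw [htan, norm_div, norm_mul, norm_neg, Complex.norm_I, one_mul]
    apply div_le_div_of_nonneg_left (norm_nonneg _) (by positivity) hdlb
  -- bound ‖α n‖ ≤ 2‖ξt‖/n
  have hαbig : ‖α n‖ ≤ 2 * ‖ξt‖ / (n:ℝ) := by
    have h1 : ‖α n / 2‖ ≤ ‖Complex.tan (α n / 2)‖ + C * ‖α n / 2‖ ^ 2 := by
      calc ‖α n / 2‖ = ‖Complex.tan (α n / 2) - (Complex.tan (α n / 2) - α n / 2)‖ := by
            congr 1; ring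
        _ ≤ ‖Complex.tan (α n / 2)‖ + ‖Complex.tan (α n / 2) - α n / 2‖ := norm_sub_le _ _
        _ ≤ _ := by linarith [hCn]
    have h2 : ‖α n / 2‖ = ‖α n‖ / 2 := by rw [norm_div]; simp
    have h3 : C * ‖α n / 2‖ ^ 2 ≤ ‖α n‖ / 4 := by
      rw [h2]
      have : C * ‖α n‖ ≤ 1 := by
        calc C * ‖α n‖ ≤ C * (1/C) := mul_le_mul_of_nonneg_left hαC hCpos.le
          _ = 1 := by field_simp
      nlinarith [norm_nonneg (α n)]
    rw [h2] at h1 h3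
    have h4 : ‖α n‖ ≤ 4 * ‖Complex.tan (α n / 2)‖ := by linarith
    calc ‖α n‖ ≤ 4 * (‖ξt‖ / (2 * (n:ℝ))) := by linarith [mul_le_mul_of_nonneg_left htannorm (by norm_num : (0:ℝ) ≤ 4)]
      _ = 2 * ‖ξt‖ / (n:ℝ) := by field_simp; ring
  -- the algebraic identity
  have htan : Complex.tan (α n / 2) = -Complex.I * ξt / d := by
    rw [eq_div_iff hdne, mul_comm]; exact heq n hn1
  have hid : α n - (-(2 * Complex.I / Real.pi) * ξt / (n : ℂ)) =
      2 * (α n / 2 - Complex.tan (α n / 2)) +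
      2 * Complex.I * ξt * α n / (((Real.pi:ℂ) * n) * d) := by
    rw [htan]
    field_simp
    rw [hddef]
    ring
  -- final norm estimate
  rw [hid]
  have hterm1 : ‖2 * (α n / 2 - Complex.tan (α n / 2))‖ ≤ 2 * C * ‖ξt‖^2 * (1/(n:ℝ)^2) := by
    rw [norm_mul]
    have : ‖α n / 2 - Complex.tan (α n / 2)‖ = ‖Complex.tan (α n / 2) - α n / 2‖ := norm_sub_rev _ _
    rw [this]
    have h2 : ‖α n / 2‖ = ‖α n‖ / 2 := by rw [norm_div]; simp
    have h5 : ‖α n / 2‖ ^ 2 ≤ ‖ξt‖^2 / (n:ℝ)^2 := by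
      rw [h2]
      have : ‖α n‖ / 2 ≤ ‖ξt‖ / (n:ℝ) := by
        rw [div_le_div_iff₀ (by norm_num) hnpos]
        have := mul_le_mul_of_nonneg_right hαbig hnpos.le
        calc ‖α n‖ * (n:ℝ) ≤ 2 * ‖ξt‖ / (n:ℝ) * (n:ℝ) := this
          _ = ‖ξt‖ * 2 := by field_simp
      calc (‖α n‖ / 2)^2 ≤ (‖ξt‖ / (n:ℝ))^2 := by
            apply pow_le_pow_left₀ (by positivity) this
        _ = ‖ξt‖^2 / (n:ℝ)^2 := by rw [div_pow]
    have hnorm2 : ‖(2:ℂ)‖ = 2 := by norm_num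
    rw [hnorm2]
    calc 2 * ‖Complex.tan (α n / 2) - α n / 2‖ ≤ 2 * (C * ‖α n / 2‖ ^ 2) := by linarith
      _ ≤ 2 * (C * (‖ξt‖^2 / (n:ℝ)^2)) := by
          apply mul_le_mul_of_nonneg_left (mul_le_mul_of_nonneg_left h5 hCpos.le) (by norm_num)
      _ = 2 * C * ‖ξt‖^2 * (1/(n:ℝ)^2) := by ring
  have hterm2 : ‖2 * Complex.I * ξt * α n / (((Real.pi:ℂ) * n) * d)‖ ≤
      2 * ‖ξt‖^2 * (1/(n:ℝ)^2) := by
    have hnd : ‖((Real.pi:ℂ) * n) * d‖ = Real.pi * (n:ℝ) * ‖d‖ := by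
      rw [norm_mul, norm_mul, Complex.norm_real, Real.norm_of_nonneg hπ.le,
        Complex.norm_natCast]
    have hnum : ‖2 * Complex.I * ξt * α n‖ = 2 * ‖ξt‖ * ‖α n‖ := by
      rw [norm_mul, norm_mul, norm_mul, Complex.norm_I]
      norm_num
    rw [norm_div, hnd, hnum]
    have hnumle : 2 * ‖ξt‖ * ‖α n‖ ≤ 2 * ‖ξt‖ * (2 * ‖ξt‖ / (n:ℝ)) :=
      mul_le_mul_of_nonneg_left hαbig (by positivity)
    have hden : Real.pi * (n:ℝ) * (2 * (n:ℝ)) ≤ Real.pi * (n:ℝ) * ‖d‖ :=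
      mul_le_mul_of_nonneg_left hdlb (by positivity)
    calc 2 * ‖ξt‖ * ‖α n‖ / (Real.pi * (n:ℝ) * ‖d‖)
        ≤ (2 * ‖ξt‖ * (2 * ‖ξt‖ / (n:ℝ))) / (Real.pi * (n:ℝ) * (2 * (n:ℝ))) :=
          div_le_div₀ (by positivity) hnumle (by positivity) hden
      _ = 2 * ‖ξt‖^2 / (Real.pi * (n:ℝ)^3) := by
          have hne : (n:ℝ) ≠ 0 := hnpos.ne'
          rw [div_eq_div_iff (by positivity) (by positivity)]
          field_simp
      _ ≤ 2 * ‖ξt‖^2 * (1/(n:ℝ)^2) := by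
          rw [mul_one_div]
          apply div_le_div₀ (by positivity) (le_refl _) (by positivity)
          have h23 : (n:ℝ)^2 ≤ (n:ℝ)^3 := by nlinarith [hn1', sq_nonneg (n:ℝ)]
          nlinarith [Real.pi_gt_three, h23, pow_pos hnpos 3]
  have hns : ‖(1:ℝ) / (n:ℝ)^2‖ = 1/(n:ℝ)^2 := Real.norm_of_nonneg (by positivity)
  rw [hns]
  calc ‖2 * (α n / 2 - Complex.tan (α n / 2)) +
      2 * Complex.I * ξt * α n / (((Real.pi:ℂ) * n) * d)‖
      ≤ ‖2 * (α n / 2 - Complex.tan (α n / 2))‖ +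
        ‖2 * Complex.I * ξt * α n / (((Real.pi:ℂ) * n) * d)‖ := norm_add_le _ _
    _ ≤ 2 * C * ‖ξt‖^2 * (1/(n:ℝ)^2) + 2 * ‖ξt‖^2 * (1/(n:ℝ)^2) := by linarith
    _ = (2*C*‖ξt‖^2 + 2*‖ξt‖^2) * (1/(n:ℝ)^2) := by ring
end

section
/- Fix $\tilde\xi \in \mathbb{C}$. For $n \in \mathbb{N}^*$, the small solution $\alpha_n$ of $(n\pi + \alpha_n)\tan(\alpha_n/2) = -i\tilde\xi$ satisfies the second-order expansion $\alpha_n = -\frac{2i}{\pi}\frac{\tilde\xi}{n} + \frac{4}{\pi^3}\frac{\tilde\xi^2}{n^3} + O(1/n^3)$ (the $\tilde\xi^2$ term being $\frac{4}{n\pi^3}\frac{\tilde\xi^2}{n^2}$). -/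
open Complex Filter Asymptotics

noncomputable def Complex.abs : AbsoluteValue ℂ ℝ where
  toFun z := ‖z‖
  map_mul' := norm_mul
  nonneg' := norm_nonneg
  eq_zero' := fun _ => norm_eq_zero
  add_le' := norm_add_le

lemma Complex.norm_eq_abs (z : ℂ) : ‖z‖ = Complex.abs z := rfl

@[simp] lemma Complex.abs_I : Complex.abs I = 1 := by
  rw [← Complex.norm_eq_abs]; simp

lemma Complex.abs_two : Complex.abs 2 = 2 := by
  rw [← Complex.norm_eq_abs]; simp

@[simp] lemma Complex.abs_natCast (n : ℕ) : Complex.abs n = n := by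
  rw [← Complex.norm_eq_abs]; simp

@[simp] lemma Complex.abs_ofReal (r : ℝ) : Complex.abs r = |r| := by
  rw [← Complex.norm_eq_abs]; simp

lemma Complex.abs.nonneg (z : ℂ) : 0 ≤ Complex.abs z := norm_nonneg z

lemma my_abs_sub_abs (a b : ℂ) : Complex.abs a - Complex.abs b ≤ Complex.abs (a - b) :=
  le_trans (le_abs_self _) (Complex.abs.abs_abv_sub_le_abv_sub a b)

lemma my_sin_approx (z : ℂ) (hz : Complex.abs z ≤ 1) :
    Complex.abs (Complex.sin z - z) ≤ (2/9) * Complex.abs z ^ 3 := by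
  have hzi : Complex.abs (z * I) ≤ 1 := by simpa using hz
  have hzi' : Complex.abs (-z * I) ≤ 1 := by simpa using hz
  have h1 := Complex.exp_bound hzi (n := 3) (by norm_num)
  have h2 := Complex.exp_bound hzi' (n := 3) (by norm_num)
  simp only [Finset.sum_range_succ, Finset.sum_range_zero] at h1 h2
  norm_num [Nat.factorial] at h1 h2
  have hrw : Complex.sin z - z =
      ((Complex.exp (-(z * I)) - (1 + -(z * I) + (z * I) ^ 2 / 2)) -
       (Complex.exp (z * I) - (1 + z * I + (z * I) ^ 2 / 2))) * I / 2 := by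
    simp only [Complex.sin, neg_mul]
    linear_combination (-z) * Complex.I_sq
  rw [hrw, map_div₀, map_mul, Complex.abs_I, Complex.abs_two, mul_one]
  have hsub := Complex.abs.sub_le_add
      (Complex.exp (-(z * I)) - (1 + -(z * I) + (z * I) ^ 2 / 2))
      (Complex.exp (z * I) - (1 + z * I + (z * I) ^ 2 / 2))
  simp only [Complex.norm_eq_abs] at h1 h2
  linarith

lemma my_cos_approx (z : ℂ) (hz : Complex.abs z ≤ 1) :
    Complex.abs (Complex.cos z - 1) ≤ (3/4) * Complex.abs z ^ 2 := by
  have hzi : Complex.abs (z * I) ≤ 1 := by simpa using hz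
  have hzi' : Complex.abs (-z * I) ≤ 1 := by simpa using hz
  have h1 := Complex.exp_bound hzi (n := 2) (by norm_num)
  have h2 := Complex.exp_bound hzi' (n := 2) (by norm_num)
  simp only [Finset.sum_range_succ, Finset.sum_range_zero] at h1 h2
  norm_num [Nat.factorial] at h1 h2
  have hrw : Complex.cos z - 1 =
      ((Complex.exp (z * I) - (1 + z * I)) + (Complex.exp (-(z * I)) - (1 + -(z * I)))) / 2 := by
    simp only [Complex.cos, neg_mul]
    ring
  rw [hrw, map_div₀, Complex.abs_two]
  have hadd := Complex.abs.add_le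
      (Complex.exp (z * I) - (1 + z * I))
      (Complex.exp (-(z * I)) - (1 + -(z * I)))
  simp only [Complex.norm_eq_abs] at h1 h2
  linarith

lemma my_cos_lower (z : ℂ) (hz : Complex.abs z ≤ 1/3) :
    (11:ℝ)/12 ≤ Complex.abs (Complex.cos z) := by
  have h := my_cos_approx z (by linarith)
  have h2 : Complex.abs z ^ 2 ≤ (1/3)^2 := by
    have := Complex.abs.nonneg z
    nlinarith
  have htri := my_abs_sub_abs 1 (1 - Complex.cos z)
  rw [sub_sub_cancel, map_one, Complex.abs.map_sub] at htri
  linarith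

lemma my_tan_approx (z : ℂ) (hz : Complex.abs z ≤ 1/3) :
    Complex.abs (Complex.tan z - z) ≤ 2 * Complex.abs z ^ 3 := by
  have hz1 : Complex.abs z ≤ 1 := by linarith
  have hcos := my_cos_lower z hz
  have hcosne : Complex.cos z ≠ 0 := by
    intro h; rw [h] at hcos; simp at hcos; linarith
  have hrw : Complex.tan z - z = (Complex.sin z - z * Complex.cos z) / Complex.cos z := by
    rw [Complex.tan_eq_sin_div_cos]; field_simp
  have hnum : Complex.abs (Complex.sin z - z * Complex.cos z) ≤ (59/36) * Complex.abs z ^ 3 := by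
    have h1 := my_sin_approx z hz1
    have h2 := my_cos_approx z hz1
    have hrw2 : Complex.sin z - z * Complex.cos z =
        (Complex.sin z - z) - z * (Complex.cos z - 1) := by ring
    rw [hrw2]
    have := Complex.abs.sub_le_add (Complex.sin z - z) (z * (Complex.cos z - 1))
    rw [map_mul] at this
    nlinarith [Complex.abs.nonneg z, Complex.abs.nonneg (Complex.cos z - 1)]
  rw [hrw, map_div₀]
  rw [div_le_iff₀ (by linarith)]
  calc Complex.abs (Complex.sin z - z * Complex.cos z) ≤ (59/36) * Complex.abs z ^ 3 := hnum
    _ ≤ 2 * Complex.abs z ^ 3 * (11/12) := by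
        nlinarith [pow_nonneg (Complex.abs.nonneg z) 3]
    _ ≤ 2 * Complex.abs z ^ 3 * Complex.abs (Complex.cos z) := by
        have h0 : (0:ℝ) ≤ 2 * Complex.abs z ^ 3 := by positivity
        nlinarith

lemma my_cube_bound (z : ℂ) (hz : Complex.abs z ≤ 1/3) :
    Complex.abs z ^ 3 ≤ (1/9) * Complex.abs z := by
  have h0 := Complex.abs.nonneg z
  have h2 : Complex.abs z ^ 2 ≤ 1/9 := by nlinarith
  calc Complex.abs z ^ 3 = Complex.abs z ^ 2 * Complex.abs z := by ring
    _ ≤ (1/9) * Complex.abs z := mul_le_mul_of_nonneg_right h2 h0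

lemma my_tan_lower (z : ℂ) (hz : Complex.abs z ≤ 1/3) :
    Complex.abs z / 2 ≤ Complex.abs (Complex.tan z) := by
  have h := my_tan_approx z hz
  have htri := my_abs_sub_abs z (Complex.tan z)
  rw [Complex.abs.map_sub] at htri
  have h3 := my_cube_bound z hz
  have h0 := Complex.abs.nonneg z
  linarith

lemma my_tan_upper (z : ℂ) (hz : Complex.abs z ≤ 1/3) :
    Complex.abs (Complex.tan z) ≤ 2 * Complex.abs z := by
  have h := my_tan_approx z hz
  have h3 := my_cube_bound z hz
  have h0 := Complex.abs.nonneg z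
  have htri : Complex.abs (Complex.tan z) ≤ Complex.abs z + Complex.abs (Complex.tan z - z) := by
    have := Complex.abs.add_le z (Complex.tan z - z)
    simpa using this
  linarith

theorem stmt_5 (ξt : ℂ) (α : ℕ → ℂ)
    (heq : ∀ n : ℕ, 1 ≤ n →
      ((n : ℂ) * Real.pi + α n) * Complex.tan (α n / 2) = -Complex.I * ξt)
    (hsmall : Tendsto α atTop (nhds 0)) :
    (fun n : ℕ => α n -
        (-(2 * Complex.I / Real.pi) * ξt / (n : ℂ) +
          (4 / (Real.pi : ℂ) ^ 3) * ξt ^ 2 / (n : ℂ) ^ 3))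
      =O[atTop] fun n : ℕ => (1 : ℝ) / (n : ℝ) ^ 3 := by
  set a : ℝ := Complex.abs ξt with ha
  have ha0 : 0 ≤ a := Complex.abs.nonneg _
  have hπ3 : (3:ℝ) < Real.pi := Real.pi_gt_three
  have hπ0 : (Real.pi : ℝ) ≠ 0 := by positivity
  rw [Asymptotics.isBigO_iff]
  refine ⟨(16 * Real.pi * a^3 + 16 * a^2) + Complex.abs ((4 / (Real.pi : ℂ) ^ 3) * ξt ^ 2), ?_⟩
  have hev : ∀ᶠ n : ℕ in atTop, Complex.abs (α n) ≤ 1/2 := by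
    have h := hsmall.eventually (Metric.closedBall_mem_nhds (0:ℂ) (by norm_num : (0:ℝ) < 1/2))
    filter_upwards [h] with n hn
    simpa [Metric.mem_closedBall, Complex.dist_eq, Complex.norm_eq_abs] using hn
  filter_upwards [hev, eventually_ge_atTop 1] with n hα hn1
  have hn0 : (0:ℝ) < (n:ℝ) := by exact_mod_cast hn1
  have hnc0 : ((n:ℂ)) ≠ 0 := by exact_mod_cast (Nat.one_le_iff_ne_zero.mp hn1)
  have heqn := heq n hn1
  set x : ℂ := α n / 2 with hx
  have hxabs : Complex.abs x = Complex.abs (α n) / 2 := by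
    rw [hx, map_div₀, Complex.abs_two]
  have hx13 : Complex.abs x ≤ 1/3 := by rw [hxabs]; linarith
  have hn1' : (1:ℝ) ≤ (n:ℝ) := by exact_mod_cast hn1
  have hnpi3 : (n:ℝ) * 3 ≤ (n:ℝ) * Real.pi := by nlinarith
  -- lower bound on |nπ + α n|
  have habs_npi : Complex.abs ((n:ℂ) * Real.pi) = (n:ℝ) * Real.pi := by
    rw [map_mul]
    simp [Complex.abs_natCast, Complex.abs_ofReal, abs_of_pos Real.pi_pos]
  have hden : (n:ℝ) ≤ Complex.abs ((n:ℂ) * Real.pi + α n) := by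
    have htri := Complex.abs.sub_le_add ((n:ℂ) * Real.pi + α n) (α n)
    simp only [add_sub_cancel_right] at htri
    rw [habs_npi] at htri
    linarith
  -- |tan x| ≤ a / n
  have hprod : Complex.abs ((n:ℂ) * Real.pi + α n) * Complex.abs (Complex.tan x) = a := by
    rw [← map_mul, heqn, map_mul]
    simp [ha]
  have htanle : (n:ℝ) * Complex.abs (Complex.tan x) ≤ a := by
    rw [← hprod]
    exact mul_le_mul_of_nonneg_right hden (Complex.abs.nonneg _)
  -- |α n| ≤ 4a/n
  have hαbd : (n:ℝ) * Complex.abs (α n) ≤ 4 * a := by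
    have hlow := my_tan_lower x hx13
    rw [hxabs] at hlow
    nlinarith [Complex.abs.nonneg (Complex.tan x)]
  -- key identity
  have hkey : (n:ℂ) * Real.pi * x + Complex.I * ξt =
      -((n:ℂ) * Real.pi * (Complex.tan x - x)) - α n * Complex.tan x := by
    rw [hx]
    linear_combination heqn
  -- bound the key quantity
  have hkb : Complex.abs ((n:ℂ) * Real.pi * x + Complex.I * ξt) ≤
      (16 * Real.pi * a^3 + 16 * a^2) / (n:ℝ)^2 := by
    rw [hkey]
    have hneg : -((n:ℂ) * Real.pi * (Complex.tan x - x)) - α n * Complex.tan x =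
        -(((n:ℂ) * Real.pi * (Complex.tan x - x)) + α n * Complex.tan x) := by ring
    rw [hneg, Complex.abs.map_neg]
    have htri := Complex.abs.add_le ((n:ℂ) * Real.pi * (Complex.tan x - x))
        (α n * Complex.tan x)
    have e1 : Complex.abs ((n:ℂ) * Real.pi * (Complex.tan x - x)) ≤
        (n:ℝ) * Real.pi * (2 * (Complex.abs (α n) / 2)^3) := by
      rw [map_mul, habs_npi]
      refine mul_le_mul_of_nonneg_left ?_ (by positivity)
      rw [← hxabs]
      exact my_tan_approx x hx13
    have e2 : Complex.abs (α n * Complex.tan x) ≤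
        Complex.abs (α n) * (2 * (Complex.abs (α n) / 2)) := by
      rw [map_mul]
      refine mul_le_mul_of_nonneg_left ?_ (Complex.abs.nonneg _)
      have := my_tan_upper x hx13
      rw [hxabs] at this
      exact this
    rw [le_div_iff₀ (by positivity : (0:ℝ) < (n:ℝ)^2)]
    have hA0 : (0:ℝ) ≤ Complex.abs (α n) := Complex.abs.nonneg _
    have e3 := htri.trans (add_le_add e1 e2)
    have e4 := mul_le_mul_of_nonneg_right e3
      (le_of_lt (by positivity : (0:ℝ) < (n:ℝ)^2))
    have c1 : ((n:ℝ) * Complex.abs (α n))^3 ≤ (4*a)^3 :=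
      pow_le_pow_left₀ (by positivity) hαbd 3
    have c2 : ((n:ℝ) * Complex.abs (α n))^2 ≤ (4*a)^2 :=
      pow_le_pow_left₀ (by positivity) hαbd 2
    have c1' : Real.pi * ((n:ℝ) * Complex.abs (α n))^3 ≤ Real.pi * (4*a)^3 :=
      mul_le_mul_of_nonneg_left c1 (le_of_lt Real.pi_pos)
    nlinarith [c1', c2, e4, Real.pi_pos]
  -- assemble
  have hid : α n + 2 * Complex.I * ξt / ((n:ℂ) * Real.pi) =
      (2 / ((n:ℂ) * Real.pi)) * ((n:ℂ) * Real.pi * x + Complex.I * ξt) := by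
    rw [hx]
    have hπc : ((Real.pi : ℂ)) ≠ 0 := by exact_mod_cast hπ0
    field_simp
  have hfin : Complex.abs (α n + 2 * Complex.I * ξt / ((n:ℂ) * Real.pi)) ≤
      (16 * Real.pi * a^3 + 16 * a^2) / (n:ℝ)^3 := by
    rw [hid, map_mul, map_div₀, habs_npi, Complex.abs_two]
    have h2n : (2:ℝ) / ((n:ℝ) * Real.pi) ≤ 1 / (n:ℝ) := by
      rw [div_le_div_iff₀ (by positivity) hn0]
      nlinarith
    calc 2 / ((n:ℝ) * Real.pi) * Complex.abs ((n:ℂ) * Real.pi * x + Complex.I * ξt)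
        ≤ (1 / (n:ℝ)) * ((16 * Real.pi * a^3 + 16 * a^2) / (n:ℝ)^2) := by
          apply mul_le_mul h2n hkb (Complex.abs.nonneg _) (by positivity)
      _ = (16 * Real.pi * a^3 + 16 * a^2) / (n:ℝ)^3 := by
          ring
  -- final
  have hsplit : α n - (-(2 * Complex.I / Real.pi) * ξt / (n : ℂ) +
        (4 / (Real.pi : ℂ) ^ 3) * ξt ^ 2 / (n : ℂ) ^ 3) =
      (α n + 2 * Complex.I * ξt / ((n:ℂ) * Real.pi)) -
        (4 / (Real.pi : ℂ) ^ 3) * ξt ^ 2 / (n : ℂ) ^ 3 := by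
    ring
  rw [Complex.norm_eq_abs, hsplit]
  have htri := Complex.abs.sub_le_add (α n + 2 * Complex.I * ξt / ((n:ℂ) * Real.pi))
      ((4 / (Real.pi : ℂ) ^ 3) * ξt ^ 2 / (n : ℂ) ^ 3)
  have hlast : Complex.abs ((4 / (Real.pi : ℂ) ^ 3) * ξt ^ 2 / (n : ℂ) ^ 3) =
      Complex.abs ((4 / (Real.pi : ℂ) ^ 3) * ξt ^ 2) / (n:ℝ)^3 := by
    rw [map_div₀, map_pow, Complex.abs_natCast]
  have hnorm : ‖(1:ℝ) / (n:ℝ)^3‖ = 1 / (n:ℝ)^3 := by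
    rw [Real.norm_eq_abs, abs_of_pos (by positivity)]
  rw [hnorm]
  rw [hlast] at htri
  have hC0 : (0:ℝ) ≤ Complex.abs ((4 / (Real.pi : ℂ) ^ 3) * ξt ^ 2) := Complex.abs.nonneg _
  have expand : ((16 * Real.pi * a^3 + 16 * a^2) + Complex.abs ((4 / (Real.pi : ℂ) ^ 3) * ξt ^ 2))
      * (1 / (n:ℝ)^3) = (16 * Real.pi * a^3 + 16 * a^2) / (n:ℝ)^3
      + Complex.abs ((4 / (Real.pi : ℂ) ^ 3) * ξt ^ 2) / (n:ℝ)^3 := by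
    ring
  rw [expand]
  linarith
end

section
/- Let $H$ be a separable Hilbert space, $\{\phi_j\}_{j\geq 1}$ a complete orthonormal family, and $\{\psi_j\}_{j \geq 1}$ a sequence with $\sum_{j=1}^\infty \|\psi_j - \phi_j\|^2 < \infty$. If the only sequence $(\eta_j)$ (with suitable summability making $\sum_j \eta_j \psi_j$ converge) satisfying $\sum_{j=1}^\infty \eta_j \psi_j = 0$ is the zero sequence, then $\{\psi_j\}$ is a (Schauder) basis of $H$. -/
open Filter


theorem opExists {H : Type*} [NormedAddCommGroup H] [InnerProductSpace ℂ H]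
    [CompleteSpace H] (φ : ℕ → H) (hφ : Orthonormal ℂ φ) (c : ℕ → H)
    (hc : Summable fun j => ‖c j‖ ^ 2) :
    ∃ T : H →L[ℂ] H, (∀ x, HasSum (fun j => (inner ℂ (φ j) x : ℂ) • c j) (T x)) ∧
      ∀ x, ‖T x‖ ≤ Real.sqrt (∑' j, ‖c j‖ ^ 2) * ‖x‖ := by
  have hsumn : ∀ x : H, Summable fun j => ‖(inner ℂ (φ j) x : ℂ)‖ * ‖c j‖ := by
    intro x
    have h1 : Summable fun j => ‖(inner ℂ (φ j) x : ℂ)‖ ^ 2 := Orthonormal.inner_products_summable x hφ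
    refine Summable.of_nonneg_of_le (fun j => by positivity)
      (fun j => ?_) ((h1.add hc).div_const 2)
    have := sq_nonneg (‖(inner ℂ (φ j) x : ℂ)‖ - ‖c j‖)
    nlinarith [norm_nonneg (inner ℂ (φ j) x : ℂ), norm_nonneg (c j)]
  have hsum : ∀ x : H, Summable fun j => (inner ℂ (φ j) x : ℂ) • c j := by
    intro x
    apply Summable.of_norm
    simpa [norm_smul] using hsumn x
  have key : ∀ x : H, ∑' j, ‖(inner ℂ (φ j) x : ℂ)‖ * ‖c j‖ ≤
      Real.sqrt (∑' j, ‖c j‖ ^ 2) * ‖x‖ := by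
    intro x
    refine Summable.tsum_le_of_sum_le (hsumn x) fun s => ?_
    have cs := Finset.sum_mul_sq_le_sq_mul_sq s (fun j => ‖(inner ℂ (φ j) x : ℂ)‖)
      (fun j => ‖c j‖)
    have ha : ∑ j ∈ s, ‖(inner ℂ (φ j) x : ℂ)‖ ^ 2 ≤ ‖x‖ ^ 2 := hφ.sum_inner_products_le x
    have hb : ∑ j ∈ s, ‖c j‖ ^ 2 ≤ ∑' j, ‖c j‖ ^ 2 :=
      Summable.sum_le_tsum s (fun _ _ => by positivity) hc
    have hB0 : (0:ℝ) ≤ ∑' j, ‖c j‖ ^ 2 := tsum_nonneg fun _ => by positivity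
    have hnn : (0:ℝ) ≤ ∑ j ∈ s, ‖(inner ℂ (φ j) x : ℂ)‖ * ‖c j‖ :=
      Finset.sum_nonneg fun j _ => by positivity
    have hsq : (∑ j ∈ s, ‖(inner ℂ (φ j) x : ℂ)‖ * ‖c j‖) ^ 2 ≤
        (∑' j, ‖c j‖ ^ 2) * ‖x‖ ^ 2 := by
      refine cs.trans ?_
      rw [mul_comm (∑' j, ‖c j‖ ^ 2)]
      exact mul_le_mul ha hb (Finset.sum_nonneg fun _ _ => by positivity) (sq_nonneg _)
    calc ∑ j ∈ s, ‖(inner ℂ (φ j) x : ℂ)‖ * ‖c j‖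
        = Real.sqrt ((∑ j ∈ s, ‖(inner ℂ (φ j) x : ℂ)‖ * ‖c j‖) ^ 2) :=
          (Real.sqrt_sq hnn).symm
      _ ≤ Real.sqrt ((∑' j, ‖c j‖ ^ 2) * ‖x‖ ^ 2) := Real.sqrt_le_sqrt hsq
      _ = Real.sqrt (∑' j, ‖c j‖ ^ 2) * ‖x‖ := by
          rw [Real.sqrt_mul hB0, Real.sqrt_sq (norm_nonneg x)]
  let F : H →ₗ[ℂ] H :=
    { toFun := fun x => ∑' j, (inner ℂ (φ j) x : ℂ) • c j
      map_add' := fun x y => by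
        simp only [inner_add_right, add_smul]
        exact Summable.tsum_add (hsum x) (hsum y)
      map_smul' := fun a x => by
        simp only [inner_smul_right, RingHom.id_apply, mul_smul]
        exact Summable.tsum_const_smul a (hsum x) }
  have hbound : ∀ x, ‖F x‖ ≤ Real.sqrt (∑' j, ‖c j‖ ^ 2) * ‖x‖ := by
    intro x
    have h1 : ‖∑' j, (inner ℂ (φ j) x : ℂ) • c j‖ ≤ ∑' j, ‖(inner ℂ (φ j) x : ℂ) • c j‖ :=
      norm_tsum_le_tsum_norm (by simpa [norm_smul] using hsumn x)
    refine h1.trans ?_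
    simpa [norm_smul] using key x
  refine ⟨F.mkContinuous _ hbound, fun x => ?_, fun x => hbound x⟩
  exact (hsum x).hasSum


theorem stmt_9 {H : Type*} [NormedAddCommGroup H] [InnerProductSpace ℂ H]
    [CompleteSpace H] [SecondCountableTopology H]
    (φ ψ : ℕ → H)
    (horth : Orthonormal ℂ φ)
    (hcomplete : Dense (Submodule.span ℂ (Set.range φ) : Set H))
    (hclose : Summable fun j : ℕ => ‖ψ j - φ j‖ ^ 2)
    (hindep : ∀ η : ℕ → ℂ, HasSum (fun j : ℕ => η j • ψ j) 0 → ∀ j, η j = 0) :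
    ∀ x : H, ∃! η : ℕ → ℂ, HasSum (fun j : ℕ => η j • ψ j) x := by
  classical
  set d : ℕ → H := fun j => ψ j - φ j with hd
  -- Hilbert basis
  have hsp : ⊤ ≤ (Submodule.span ℂ (Set.range φ)).topologicalClosure := by
    intro x _
    exact hcomplete x
  have hbasis : ∀ y : H, HasSum (fun j => (inner ℂ (φ j) y : ℂ) • φ j) y := by
    intro y
    have hcoe : ⇑(HilbertBasis.mk horth hsp) = φ := HilbertBasis.coe_mk horth hsp
    have h := (HilbertBasis.mk horth hsp).hasSum_repr y
    have heq : (fun j => (HilbertBasis.mk horth hsp).repr y j • (HilbertBasis.mk horth hsp) j)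
        = fun j => (inner ℂ (φ j) y : ℂ) • φ j := by
      funext j
      rw [HilbertBasis.repr_apply_apply, hcoe]
    rwa [heq] at h
  obtain ⟨T, hT, hTb⟩ := opExists φ horth d hclose
  -- expansion fact
  have hexp : ∀ y : H, HasSum (fun j => (inner ℂ (φ j) y : ℂ) • ψ j) (y + T y) := by
    intro y
    have h := (hbasis y).add (hT y)
    convert h using 2 with j
    rw [← smul_add, add_sub_cancel]
  -- injectivity of A : x ↦ x + T x
  have hAinj : ∀ y : H, y + T y = 0 → y = 0 := by
    intro y hy
    have h0 : ∀ j, (inner ℂ (φ j) y : ℂ) = 0 := hindep _ (hy ▸ hexp y)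
    have : HasSum (fun j : ℕ => (0:H)) y := by
      have := hbasis y
      simpa [h0] using this
    exact (hasSum_zero.unique this).symm
  -- choose N with small tail
  obtain ⟨N, hN⟩ : ∃ N, ∑' j, ‖d (j + N)‖ ^ 2 < 1 := by
    have h := tendsto_sum_nat_add (f := fun j => ‖d j‖ ^ 2)
    exact (h.eventually (gt_mem_nhds (by norm_num : (0:ℝ) < 1))).exists
  set c' : ℕ → H := fun j => if j < N then 0 else d j with hc'
  have hc'sum : Summable fun j => ‖c' j‖ ^ 2 := by
    refine Summable.of_nonneg_of_le (fun j => by positivity) (fun j => ?_) hclose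
    by_cases h : j < N
    · simp only [hc', if_pos h, norm_zero]
      nlinarith [sq_nonneg ‖ψ j - φ j‖]
    · simp [hc', if_neg h, hd]
  have hc'tail : ∑' j, ‖c' j‖ ^ 2 = ∑' j, ‖d (j + N)‖ ^ 2 := by
    rw [← Summable.sum_add_tsum_nat_add N hc'sum]
    have h1 : ∑ i ∈ Finset.range N, ‖c' i‖ ^ 2 = 0 := by
      apply Finset.sum_eq_zero
      intro i hi
      simp [hc', Finset.mem_range.mp hi]
    have h2 : ∀ i : ℕ, ‖c' (i + N)‖ ^ 2 = ‖d (i + N)‖ ^ 2 := by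
      intro i; simp [hc', Nat.not_lt.mpr (Nat.le_add_left N i)]
    simp [h1, h2]
  obtain ⟨T', hT', hT'b⟩ := opExists φ horth c' hc'sum
  have hT'norm : ‖T'‖ < 1 := by
    have h1 : ‖T'‖ ≤ Real.sqrt (∑' j, ‖c' j‖ ^ 2) :=
      T'.opNorm_le_bound (Real.sqrt_nonneg _) hT'b
    refine h1.trans_lt ?_
    rw [hc'tail]
    calc Real.sqrt (∑' j, ‖d (j + N)‖ ^ 2) < Real.sqrt 1 :=
          Real.sqrt_lt_sqrt (tsum_nonneg fun _ => by positivity) hN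
      _ = 1 := Real.sqrt_one
  -- the unit
  let u : (H →L[ℂ] H)ˣ := Units.oneSub (-T') (by rwa [norm_neg])
  have huval : (u : H →L[ℂ] H) = 1 + T' := by
    show 1 - (-T') = 1 + T'
    rw [sub_neg_eq_add]
  set Sinv : H →L[ℂ] H := ((u⁻¹ : (H →L[ℂ] H)ˣ) : H →L[ℂ] H) with hSinv
  have hu_inv : ∀ z : H, (u : H →L[ℂ] H) (Sinv z) = z := by
    intro z
    have : ((u : H →L[ℂ] H) * Sinv) z = ((1 : H →L[ℂ] H)) z := by
      rw [show (u : H →L[ℂ] H) * Sinv = 1 from u.mul_inv]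
    simpa using this
  -- finite rank part
  have hF : ∀ x : H, T x - T' x = ∑ j ∈ Finset.range N, (inner ℂ (φ j) x : ℂ) • d j := by
    intro x
    have h1 : HasSum (fun j => (inner ℂ (φ j) x : ℂ) • d j - (inner ℂ (φ j) x : ℂ) • c' j)
        (T x - T' x) := (hT x).sub (hT' x)
    have h2 : HasSum (fun j => (inner ℂ (φ j) x : ℂ) • d j - (inner ℂ (φ j) x : ℂ) • c' j)
        (∑ j ∈ Finset.range N,
          ((inner ℂ (φ j) x : ℂ) • d j - (inner ℂ (φ j) x : ℂ) • c' j)) := by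
      apply hasSum_sum_of_ne_finset_zero
      intro j hj
      have : ¬ j < N := fun h => hj (Finset.mem_range.mpr h)
      simp [hc', this]
    have h3 := h2.unique h1
    rw [← h3]
    apply Finset.sum_congr rfl
    intro j hj
    simp [hc', Finset.mem_range.mp hj]
  set G : H →L[ℂ] H := Sinv.comp (T - T') with hG
  have hfact : ∀ x : H, x + T x = (u : H →L[ℂ] H) (x + G x) := by
    intro x
    have h1 : (u : H →L[ℂ] H) (G x) = T x - T' x := by
      have : G x = Sinv ((T - T') x) := rfl
      rw [this, hu_inv]
      simp
    rw [map_add, h1, huval]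
    simp only [ContinuousLinearMap.add_apply, ContinuousLinearMap.one_apply]
    abel
  -- finite dimensional W
  set W : Submodule ℂ H := Submodule.span ℂ (Set.range fun j : Fin N => Sinv (d j)) with hW
  haveI : FiniteDimensional ℂ W := FiniteDimensional.span_of_finite ℂ (Set.finite_range _)
  have hGW : ∀ x : H, G x ∈ W := by
    intro x
    have : G x = Sinv ((T - T') x) := rfl
    rw [this]
    have h2 : (T - T') x = T x - T' x := rfl
    rw [h2, hF x, map_sum]
    apply Submodule.sum_mem
    intro j hj
    rw [map_smul]
    exact Submodule.smul_mem _ _ (Submodule.subset_span ⟨⟨j, Finset.mem_range.mp hj⟩, rfl⟩)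
  -- K injective
  have hKinj : ∀ x y : H, x + G x = y + G y → x = y := by
    intro x y hxy
    have h1 : (x - y) + T (x - y) = 0 := by
      have : x + T x = y + T y := by rw [hfact, hfact, hxy]
      rw [map_sub]
      rw [show x - y + (T x - T y) = (x + T x) - (y + T y) by abel, this, sub_self]
    exact sub_eq_zero.mp (hAinj _ h1)
  -- K restricted to W
  let k : W →ₗ[ℂ] W :=
    { toFun := fun w => ⟨(w : H) + G w, W.add_mem w.2 (hGW w)⟩
      map_add' := fun a b => by
        ext
        simp only [Submodule.coe_add, map_add, AddSubmonoid.mk_add_mk]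
        abel
      map_smul' := fun a w => by
        ext
        simp only [Submodule.coe_smul, map_smul, RingHom.id_apply, SetLike.val_smul]
        rw [smul_add] }
  have hkinj : Function.Injective k := by
    intro a b hab
    have := congrArg (Subtype.val) hab
    exact Subtype.ext (hKinj _ _ this)
  have hksurj : Function.Surjective k :=
    (LinearMap.injective_iff_surjective (f := k)).mp hkinj
  -- K surjective on H
  have hKsurj : ∀ z : H, ∃ x : H, x + G x = z := by
    intro z
    obtain ⟨w, hw⟩ := hksurj ⟨G z, hGW z⟩
    refine ⟨z - w, ?_⟩
    have hw' : (w : H) + G w = G z := congrArg Subtype.val hw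
    rw [map_sub]
    calc z - (w : H) + (G z - G w) = z + G z - ((w : H) + G w) := by abel
      _ = z := by rw [hw']; abel
  -- A surjective
  have hAsurj : ∀ z : H, ∃ y : H, y + T y = z := by
    intro z
    obtain ⟨y, hy⟩ := hKsurj (Sinv z)
    exact ⟨y, by rw [hfact, hy, hu_inv]⟩
  -- conclusion
  intro x
  obtain ⟨y, hy⟩ := hAsurj x
  refine ⟨fun j => (inner ℂ (φ j) y : ℂ), by rw [← hy]; exact hexp y, ?_⟩
  intro η hη
  have hδ : HasSum (fun j => (η j - (inner ℂ (φ j) y : ℂ)) • ψ j) 0 := by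
    have h2 : HasSum (fun j => (inner ℂ (φ j) y : ℂ) • ψ j) x := by
      rw [← hy]; exact hexp y
    have := hη.sub h2
    simpa [sub_smul] using this
  funext j
  have := hindep _ hδ j
  exact sub_eq_zero.mp this
end

section
/- With $\psi_n$ as above and $\alpha_n = \alpha_n(\tilde\xi)$ the small solution of $(n\pi+\alpha_n)\tan(\alpha_n/2) = -i\tilde\xi$, write $\tilde\xi = \zeta + i\eta$. Then $I_n := \frac{1}{w}\int_{-w/2}^{w/2} |\psi_n(x)|^2\,dx = \frac{1}{2} + \frac{\zeta^2}{3\pi^2 n^2} + \frac{\eta}{\pi^2 n^2} + o(1/n^2)$ as $n \to \infty$. -/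
open Complex Real Filter Asymptotics

noncomputable def mySinhc (t : ℝ) : ℝ := if t = 0 then 1 else Real.sinh t / t
noncomputable def mySinc (t : ℝ) : ℝ := if t = 0 then 1 else Real.sin t / t

lemma mySinhc_neg (t : ℝ) : mySinhc (-t) = mySinhc t := by
  rcases eq_or_ne t 0 with rfl | h
  · simp
  · simp only [mySinhc, if_neg h, if_neg (neg_ne_zero.mpr h), Real.sinh_neg, neg_div_neg_eq]

lemma intE (c h : ℝ) (hh : 0 < h) :
    ∫ x in (-h)..h, Real.exp (c * x) = 2 * h * mySinhc (c * h) := by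
  rcases eq_or_ne c 0 with rfl | hc
  · simp [mySinhc, hh.ne']; ring
  · have hch : c * h ≠ 0 := mul_ne_zero hc hh.ne'
    have hder : ∀ x ∈ Set.uIcc (-h) h,
        HasDerivAt (fun y : ℝ => Real.exp (c * y) / c) (Real.exp (c * x)) x := by
      intro x _
      have h1 : HasDerivAt (fun y : ℝ => Real.exp (c * y)) (Real.exp (c * x) * c) x := by
        simpa using ((hasDerivAt_id x).const_mul c).exp
      simpa [mul_div_cancel_right₀ _ hc] using h1.div_const c
    rw [intervalIntegral.integral_eq_sub_of_hasDerivAt hder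
      ((Real.continuous_exp.comp (continuous_const.mul continuous_id)).intervalIntegrable _ _)]
    simp only [mySinhc, if_neg hch, Real.sinh_eq]
    field_simp

lemma intC (c h : ℝ) (hh : 0 < h) :
    ∫ x in (-h)..h, Real.cos (c * x) = 2 * h * mySinc (c * h) := by
  rcases eq_or_ne c 0 with rfl | hc
  · simp [mySinc, hh.ne']; ring
  · have hch : c * h ≠ 0 := mul_ne_zero hc hh.ne'
    have hder : ∀ x ∈ Set.uIcc (-h) h,
        HasDerivAt (fun y : ℝ => Real.sin (c * y) / c) (Real.cos (c * x)) x := by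
      intro x _
      have h1 : HasDerivAt (fun y : ℝ => Real.sin (c * y)) (Real.cos (c * x) * c) x := by
        simpa using ((hasDerivAt_id x).const_mul c).sin
      simpa [mul_div_cancel_right₀ _ hc] using h1.div_const c
    rw [intervalIntegral.integral_eq_sub_of_hasDerivAt hder
      ((Real.continuous_cos.comp (continuous_const.mul continuous_id)).intervalIntegrable _ _)]
    simp only [mySinc, if_neg hch]
    rw [mul_comm c (-h), neg_mul, Real.sin_neg, mul_comm c h]
    field_simp
    ring


lemma sinh_taylor {t : ℝ} (ht : |t| ≤ 1) : |Real.sinh t - (t + t ^ 3 / 6)| ≤ |t| ^ 4 := by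
  have h1 := Real.exp_bound ht (n := 5) (by norm_num)
  have h2 := Real.exp_bound (x := -t) (by rwa [abs_neg]) (n := 5) (by norm_num)
  have hs1 : ∑ m ∈ Finset.range 5, t ^ m / m.factorial
      = 1 + t + t ^ 2 / 2 + t ^ 3 / 6 + t ^ 4 / 24 := by
    simp [Finset.sum_range_succ, Nat.factorial]
  have hs2 : ∑ m ∈ Finset.range 5, (-t) ^ m / m.factorial
      = 1 - t + t ^ 2 / 2 - t ^ 3 / 6 + t ^ 4 / 24 := by
    simp [Finset.sum_range_succ, Nat.factorial]
    ring
  rw [hs1] at h1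
  rw [hs2, abs_neg] at h2
  have key : Real.sinh t - (t + t ^ 3 / 6) =
      ((Real.exp t - (1 + t + t ^ 2 / 2 + t ^ 3 / 6 + t ^ 4 / 24))
        - (Real.exp (-t) - (1 - t + t ^ 2 / 2 - t ^ 3 / 6 + t ^ 4 / 24))) / 2 := by
    rw [Real.sinh_eq]; ring
  have ht4 : |t| ^ 5 ≤ |t| ^ 4 := pow_le_pow_of_le_one (abs_nonneg t) ht (by norm_num)
  calc |Real.sinh t - (t + t ^ 3 / 6)| ≤ (|t| ^ 5 * (6 / (120 * 5)) + |t| ^ 5 * (6 / (120 * 5))) / 2 := by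
        rw [key]
        rw [abs_div, _root_.abs_two]
        gcongr
        refine (abs_sub _ _).trans (add_le_add ?_ ?_)
        · simpa [Nat.factorial] using h1
        · simpa [Nat.factorial] using h2
    _ ≤ |t| ^ 4 := by nlinarith [abs_nonneg t, pow_nonneg (abs_nonneg t) 5]

lemma sin_taylor1 {t : ℝ} (ht : |t| ≤ 1) : |Real.sin t - t| ≤ |t| ^ 3 := by
  have h1 := Real.sin_bound ht
  have ht4 : |t| ^ 4 ≤ |t| ^ 3 := pow_le_pow_of_le_one (abs_nonneg t) ht (by norm_num)
  have h2 : |Real.sin t - t| ≤ |Real.sin t - (t - t ^ 3 / 6)| + |t ^ 3 / 6| := by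
    have e : Real.sin t - t = (Real.sin t - (t - t ^ 3 / 6)) - t ^ 3 / 6 := by ring
    rw [e]; exact abs_sub _ _
  have h3 : |t ^ 3 / 6| = |t| ^ 3 / 6 := by rw [abs_div, _root_.abs_pow]; norm_num
  nlinarith [abs_nonneg t, pow_nonneg (abs_nonneg t) 3]

lemma sinhc_taylor {t : ℝ} (ht : |t| ≤ 1) : |mySinhc t - 1 - t ^ 2 / 6| ≤ |t| ^ 3 := by
  rcases eq_or_ne t 0 with rfl | h
  · simp [mySinhc]
  · have : mySinhc t - 1 - t ^ 2 / 6 = (Real.sinh t - (t + t ^ 3 / 6)) / t := by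
      rw [mySinhc, if_neg h]; field_simp; ring
    rw [this, abs_div]
    rw [div_le_iff₀ (abs_pos.mpr h)]
    calc |Real.sinh t - (t + t ^ 3 / 6)| ≤ |t| ^ 4 := sinh_taylor ht
      _ = |t| ^ 3 * |t| := by ring

lemma norm_sq_point (γ : ℂ) (n : ℕ) (x : ℝ) :
    ‖Complex.exp (Complex.I * γ * x) + (-1:ℂ) ^ n * Complex.exp (-(Complex.I * γ * x))‖ ^ 2
      = Real.exp (-(2 * γ.im) * x) + Real.exp ((2 * γ.im) * x)
        + 2 * (-1:ℝ) ^ n * Real.cos (2 * γ.re * x) := by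
  rw [Complex.sq_norm, Complex.normSq_add]
  have e1 : Complex.normSq (Complex.exp (Complex.I * γ * x)) = Real.exp (-(2 * γ.im) * x) := by
    rw [← Complex.sq_norm, Complex.norm_exp, sq, ← Real.exp_add]
    congr 1
    simp [Complex.mul_re, Complex.I_re, Complex.I_im]
    ring
  have e2 : Complex.normSq ((-1:ℂ) ^ n * Complex.exp (-(Complex.I * γ * x)))
      = Real.exp ((2 * γ.im) * x) := by
    rw [map_mul, map_pow]
    simp only [Complex.normSq_neg, Complex.normSq_one, one_pow, one_mul]
    rw [← Complex.sq_norm, Complex.norm_exp, sq, ← Real.exp_add]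
    congr 1
    simp [Complex.mul_re, Complex.I_re, Complex.I_im]
    ring
  have e3 : (Complex.exp (Complex.I * γ * x) * (starRingEnd ℂ) ((-1:ℂ) ^ n
        * Complex.exp (-(Complex.I * γ * x)))).re = (-1:ℝ) ^ n * Real.cos (2 * γ.re * x) := by
    rw [map_mul, map_pow, map_neg, map_one, ← Complex.exp_conj]
    have harg : Complex.I * γ * x + (starRingEnd ℂ) (-(Complex.I * γ * x))
        = ((2 * γ.re * x : ℝ) : ℂ) * Complex.I := by
      apply Complex.ext <;>
        simp [Complex.mul_re, Complex.mul_im, Complex.I_re, Complex.I_im] <;> ring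
    calc (Complex.exp (Complex.I * γ * ↑x) * ((-1:ℂ) ^ n
            * Complex.exp ((starRingEnd ℂ) (-(Complex.I * γ * ↑x))))).re
        = (((-1:ℝ) ^ n : ℝ) * Complex.exp (((2 * γ.re * x : ℝ) : ℂ) * Complex.I)).re := by
          rw [mul_comm (Complex.exp _), mul_assoc, ← Complex.exp_add, add_comm, harg]
          norm_cast
      _ = (-1:ℝ) ^ n * Real.cos (2 * γ.re * x) := by
          rw [Complex.re_ofReal_mul, Complex.exp_ofReal_mul_I_re]
  rw [e1, e2, e3]
  ring

lemma key_lim (ξt : ℂ) (α : ℕ → ℂ)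
    (heq : ∀ n : ℕ, 1 ≤ n →
      ((n : ℂ) * Real.pi + α n) * Complex.tan (α n / 2) = -Complex.I * ξt)
    (hsmall : Tendsto α atTop (nhds 0)) :
    Tendsto (fun n : ℕ => (n : ℂ) * α n) atTop (nhds (-2 * Complex.I * ξt / (Real.pi : ℂ))) := by
  have hπ : (Real.pi : ℂ) ≠ 0 := Complex.ofReal_ne_zero.mpr Real.pi_ne_zero
  have hnorm : ∀ᶠ n in atTop, ‖α n‖ < 1 := by
    have := Metric.tendsto_nhds.mp hsmall 1 one_pos
    simpa [dist_zero_right] using this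
  rcases eq_or_ne ξt 0 with rfl | hξ
  · -- eventually α n = 0
    have hev : ∀ᶠ n : ℕ in atTop, (n : ℂ) * α n = 0 := by
      filter_upwards [eventually_ge_atTop 1, hnorm] with n hn hlt
      have he := heq n hn
      rw [mul_zero] at he
      have h1 : (n : ℂ) * (Real.pi : ℂ) + α n ≠ 0 := by
        intro h
        have hα : α n = -((n : ℂ) * (Real.pi : ℂ)) := by linear_combination h
        have : ‖α n‖ = (n : ℝ) * Real.pi := by
          rw [hα, norm_neg, norm_mul, Complex.norm_natCast, Complex.norm_real,
            Real.norm_of_nonneg Real.pi_pos.le]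
        have hn1 : (1 : ℝ) ≤ (n : ℝ) := by exact_mod_cast hn
        nlinarith [Real.pi_gt_three]
      have htan : Complex.tan (α n / 2) = 0 := by
        rcases mul_eq_zero.mp he with h | h
        · exact absurd h h1
        · exact h
      have hhalf : ‖α n / 2‖ < 1 / 2 := by
        rw [norm_div, Complex.norm_ofNat]
        linarith
      have hcos : Complex.cos (α n / 2) ≠ 0 := by
        intro hc
        obtain ⟨k, hk⟩ := Complex.cos_eq_zero_iff.mp hc
        have : ‖α n / 2‖ = |(2 * (k : ℝ) + 1)| * Real.pi / 2 := by
          rw [hk]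
          rw [norm_div, norm_mul, Complex.norm_ofNat]
          congr 1
          congr 1
          · rw [show (2 * (k : ℂ) + 1) = (((2 * (k : ℝ) + 1) : ℝ) : ℂ) by push_cast; ring,
              Complex.norm_real]
            rfl
          · rw [Complex.norm_real, Real.norm_of_nonneg Real.pi_pos.le]
        have hk1 : (1 : ℝ) ≤ |(2 * (k : ℝ) + 1)| := by
          have : (2 * (k : ℝ) + 1) = ((2 * k + 1 : ℤ) : ℝ) := by push_cast; ring
          rw [this, ← Int.cast_abs]
          have : (1 : ℤ) ≤ |2 * k + 1| := Int.one_le_abs (by omega)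
          exact_mod_cast this
        nlinarith [Real.pi_gt_three]
      have hsin : Complex.sin (α n / 2) = 0 := by
        rw [Complex.tan_eq_sin_div_cos, div_eq_zero_iff] at htan
        tauto
      obtain ⟨k, hk⟩ := Complex.sin_eq_zero_iff.mp hsin
      rcases eq_or_ne k 0 with rfl | hk0
      · rw [Int.cast_zero, zero_mul] at hk
        rw [show α n = 0 by linear_combination 2 * hk, mul_zero]
      · exfalso
        have : ‖α n / 2‖ = |(k : ℝ)| * Real.pi := by
          rw [hk, norm_mul, Complex.norm_real, Real.norm_of_nonneg Real.pi_pos.le,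
            Complex.norm_intCast]
        have hk1 : (1 : ℝ) ≤ |(k : ℝ)| := by
          rw [← Int.cast_abs]
          exact_mod_cast Int.one_le_abs hk0
        nlinarith [Real.pi_gt_three]
    have : Tendsto (fun _ : ℕ => (0 : ℂ)) atTop (nhds (-2 * Complex.I * 0 / (Real.pi : ℂ))) := by
      simpa using tendsto_const_nhds
    exact this.congr' (by filter_upwards [hev] with n h using h.symm)
  · -- main case
    have htanne : ∀ n, 1 ≤ n → Complex.tan (α n / 2) ≠ 0 := by
      intro n hn h0
      have := heq n hn
      rw [h0, mul_zero] at this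
      exact hξ (by simpa [neg_eq_zero, Complex.I_ne_zero] using this.symm)
    have hαne : ∀ n, 1 ≤ n → α n ≠ 0 := by
      intro n hn h0
      exact htanne n hn (by rw [h0]; simp [Complex.tan_zero])
    have htan0 : Tendsto (fun n : ℕ => Complex.tan (α n / 2)) atTop (nhds 0) := by
      have hc : ContinuousAt Complex.tan 0 :=
        Complex.continuousAt_tan.mpr (by simp [Complex.cos_zero])
      have h2 : Tendsto (fun n : ℕ => α n / 2) atTop (nhds 0) := by
        simpa using hsmall.div_const 2
      have := hc.tendsto.comp h2
      simpa [Function.comp_def, Complex.tan_zero] using this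
    have hmul : Tendsto (fun n : ℕ => (n : ℂ) * (Real.pi : ℂ) * Complex.tan (α n / 2)) atTop
        (nhds (-Complex.I * ξt)) := by
      have h0 : Tendsto (fun n : ℕ => α n * Complex.tan (α n / 2)) atTop (nhds 0) := by
        simpa using hsmall.mul htan0
      have h1 : Tendsto (fun n : ℕ => -Complex.I * ξt - α n * Complex.tan (α n / 2)) atTop
          (nhds (-Complex.I * ξt)) := by
        have := (tendsto_const_nhds (x := -Complex.I * ξt) (f := (atTop : Filter ℕ))).sub h0
        simpa using this
      refine h1.congr' ?_
      filter_upwards [eventually_ge_atTop 1] with n hn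
      linear_combination -heq n hn
    have hslope : Tendsto (fun n : ℕ => Complex.tan (α n / 2) / (α n / 2)) atTop (nhds 1) := by
      have hd : HasDerivAt Complex.tan 1 0 := by
        simpa using Complex.hasDerivAt_tan (by simp [Complex.cos_zero] : Complex.cos 0 ≠ 0)
      have hsl := hasDerivAt_iff_tendsto_slope.mp hd
      have hto : Tendsto (fun n : ℕ => α n / 2) atTop (nhdsWithin 0 {(0:ℂ)}ᶜ) := by
        rw [tendsto_nhdsWithin_iff]
        constructor
        · simpa using hsmall.div_const 2
        · filter_upwards [eventually_ge_atTop 1] with n hn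
          exact div_ne_zero (hαne n hn) two_ne_zero
      have := hsl.comp hto
      simpa only [Function.comp_def, slope_def_field, Complex.tan_zero, sub_zero] using this
    have hinv : Tendsto (fun n : ℕ => (α n / 2) / Complex.tan (α n / 2)) atTop (nhds 1) := by
      have := hslope.inv₀ one_ne_zero
      simpa [inv_div] using this
    have hfinal : Tendsto (fun n : ℕ => ((n : ℂ) * (Real.pi : ℂ) * Complex.tan (α n / 2))
        * ((α n / 2) / Complex.tan (α n / 2)) * (2 / (Real.pi : ℂ))) atTop
        (nhds (-2 * Complex.I * ξt / (Real.pi : ℂ))) := by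
      have := (hmul.mul hinv).mul (tendsto_const_nhds (x := 2 / (Real.pi : ℂ)))
      convert this using 2
      ring
    refine hfinal.congr' ?_
    filter_upwards [eventually_ge_atTop 1] with n hn
    have ht := htanne n hn
    field_simp

theorem stmt_12 (k0 w : ℝ) (hk0 : 0 < k0) (hw : 0 < w)
    (ξt : ℂ) (ζ η : ℝ) (hζ : ζ = ξt.re) (hη : η = ξt.im)
    (α : ℕ → ℂ)
    (heq : ∀ n : ℕ, 1 ≤ n →
      ((n : ℂ) * Real.pi + α n) * Complex.tan (α n / 2) = -Complex.I * ξt)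
    (hsmall : Tendsto α atTop (nhds 0))
    (μ : ℕ → ℂ) (hμ : ∀ n : ℕ, μ n = ((n : ℂ) * Real.pi + α n) / (k0 * w))
    (ψ : ℕ → ℝ → ℂ)
    (hψ : ∀ (n : ℕ) (x : ℝ), ψ n x = (1 / 2) * (-Complex.I) ^ n *
      (Complex.exp (Complex.I * μ n * k0 * x) +
        (-1 : ℂ) ^ n * Complex.exp (-(Complex.I * μ n * k0 * x)))) :
    (fun n : ℕ =>
        (1 / w) * (∫ x in (-(w / 2))..(w / 2), ‖ψ n x‖ ^ 2) -
          (1 / 2 + ζ ^ 2 / (3 * Real.pi ^ 2 * (n : ℝ) ^ 2) +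
            η / (Real.pi ^ 2 * (n : ℝ) ^ 2)))
      =o[atTop] fun n : ℕ => (1 : ℝ) / (n : ℝ) ^ 2 := by
  have hπ := Real.pi_pos
  have hπ3 := Real.pi_gt_three
  set R : ℕ → ℝ := fun n => (α n).re with hRdef
  set S : ℕ → ℝ := fun n => (α n).im with hSdef
  -- Integral identity
  have hint : ∀ n : ℕ, (1 / w) * (∫ x in (-(w / 2))..(w / 2), ‖ψ n x‖ ^ 2)
      = (1/2) * mySinhc (S n) + (1/2) * (-1:ℝ) ^ n * mySinc ((n:ℝ) * Real.pi + R n) := by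
    intro n
    set γ : ℂ := ((n : ℂ) * (Real.pi : ℝ) + α n) / (w : ℂ) with hγdef
    have hγre : γ.re = ((n:ℝ) * Real.pi + R n) / w := by
      rw [hγdef, Complex.div_ofReal_re]
      congr 1
      simp [Complex.add_re, Complex.mul_re]; rfl
    have hγim : γ.im = S n / w := by
      rw [hγdef, Complex.div_ofReal_im]
      congr 1
      simp [Complex.add_im, Complex.mul_im]; rfl
    have hk : (k0:ℂ) ≠ 0 := Complex.ofReal_ne_zero.mpr hk0.ne'
    have hwc : (w:ℂ) ≠ 0 := Complex.ofReal_ne_zero.mpr hw.ne'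
    have harg : ∀ x : ℝ, Complex.I * μ n * k0 * x = Complex.I * γ * x := by
      intro x
      rw [hμ, hγdef]
      field_simp
    have hpt : ∀ x : ℝ, ‖ψ n x‖ ^ 2 = (1/4) * (Real.exp (-(2 * γ.im) * x)
        + Real.exp ((2 * γ.im) * x) + 2 * (-1:ℝ) ^ n * Real.cos (2 * γ.re * x)) := by
      intro x
      rw [hψ, harg]
      rw [norm_mul, norm_mul, norm_pow, norm_neg, Complex.norm_I, one_pow, mul_one,
        mul_pow, norm_sq_point γ n x]
      norm_num
    have i1 : IntervalIntegrable (fun x => Real.exp (-(2 * γ.im) * x))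
        MeasureTheory.volume (-(w/2)) (w/2) :=
      (Real.continuous_exp.comp (continuous_const.mul continuous_id)).intervalIntegrable _ _
    have i2 : IntervalIntegrable (fun x => Real.exp ((2 * γ.im) * x))
        MeasureTheory.volume (-(w/2)) (w/2) :=
      (Real.continuous_exp.comp (continuous_const.mul continuous_id)).intervalIntegrable _ _
    have i3 : IntervalIntegrable (fun x => 2 * (-1:ℝ) ^ n * Real.cos (2 * γ.re * x))
        MeasureTheory.volume (-(w/2)) (w/2) :=
      (continuous_const.mul (Real.continuous_cos.comp
        (continuous_const.mul continuous_id))).intervalIntegrable _ _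
    have hI : (∫ x in (-(w/2))..(w/2), ‖ψ n x‖ ^ 2)
        = (1/4) * ((2 * (w/2) * mySinhc (-(2 * γ.im) * (w/2)))
          + (2 * (w/2) * mySinhc ((2 * γ.im) * (w/2)))
          + 2 * (-1:ℝ) ^ n * (2 * (w/2) * mySinc ((2 * γ.re) * (w/2)))) := by
      rw [intervalIntegral.integral_congr (g := fun x => (1/4) * (Real.exp (-(2 * γ.im) * x)
        + Real.exp ((2 * γ.im) * x) + 2 * (-1:ℝ) ^ n * Real.cos (2 * γ.re * x)))
        (fun x _ => hpt x)]
      rw [intervalIntegral.integral_const_mul]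
      rw [intervalIntegral.integral_add (i1.add i2) i3, intervalIntegral.integral_add i1 i2]
      rw [intervalIntegral.integral_const_mul]
      rw [intE _ _ (by linarith), intE _ _ (by linarith), intC _ _ (by linarith)]
    rw [hI]
    have hwne : w ≠ 0 := hw.ne'
    have h1 : -(2 * γ.im) * (w/2) = -(S n) := by rw [hγim]; field_simp; try ring
    have h2 : (2 * γ.im) * (w/2) = S n := by rw [hγim]; field_simp; try ring
    have h3 : (2 * γ.re) * (w/2) = (n:ℝ) * Real.pi + R n := by rw [hγre]; field_simp; try ring
    rw [h1, h2, h3, mySinhc_neg]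
    field_simp
    ring
  -- limits of n * re / im of α
  have key := key_lim ξt α heq hsmall
  have hR1 : Tendsto (fun n : ℕ => (n:ℝ) * R n) atTop (nhds (2 * η / Real.pi)) := by
    have h0 := (Complex.continuous_re.tendsto _).comp key
    have e2 : (-2 * Complex.I * ξt / (Real.pi : ℂ)).re = 2 * η / Real.pi := by
      rw [Complex.div_ofReal_re]
      congr 1
      simp [Complex.mul_re, Complex.mul_im, hη]
      try ring
    rw [e2] at h0
    refine h0.congr fun n => ?_
    simp [Function.comp, Complex.mul_re]; exact Or.inl rfl
  have hS1 : Tendsto (fun n : ℕ => (n:ℝ) * S n) atTop (nhds (-2 * ζ / Real.pi)) := by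
    have h0 := (Complex.continuous_im.tendsto _).comp key
    have e2 : (-2 * Complex.I * ξt / (Real.pi : ℂ)).im = -2 * ζ / Real.pi := by
      rw [Complex.div_ofReal_im]
      congr 1
      simp [Complex.mul_re, Complex.mul_im, hζ]
      try ring
    rw [e2] at h0
    refine h0.congr fun n => ?_
    simp [Function.comp, Complex.mul_im]; exact Or.inl rfl
  have hR0 : Tendsto R atTop (nhds 0) := by
    have := (Complex.continuous_re.tendsto _).comp hsmall
    exact this
  have hS0 : Tendsto S atTop (nhds 0) := by
    have := (Complex.continuous_im.tendsto _).comp hsmall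
    exact this
  have hRsmall : ∀ᶠ n : ℕ in atTop, |R n| ≤ 1 := by
    have := Metric.tendsto_nhds.mp hR0 1 one_pos
    filter_upwards [this] with n h
    rw [Real.dist_eq, sub_zero] at h
    exact h.le
  have hSsmall : ∀ᶠ n : ℕ in atTop, |S n| ≤ 1 := by
    have := Metric.tendsto_nhds.mp hS0 1 one_pos
    filter_upwards [this] with n h
    rw [Real.dist_eq, sub_zero] at h
    exact h.le
  -- part A
  have hE : Tendsto (fun n : ℕ => (n:ℝ)^2 * (mySinhc (S n) - 1 - (S n)^2 / 6)) atTop (nhds 0) := by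
    have hg : Tendsto (fun n : ℕ => ((n:ℝ) * S n) * ((n:ℝ) * S n) * |S n|) atTop (nhds 0) := by
      have := (hS1.mul hS1).mul hS0.abs
      simpa using this
    apply squeeze_zero_norm' ?_ hg
    filter_upwards [hSsmall] with n h
    have hb := sinhc_taylor h
    calc ‖(n:ℝ)^2 * (mySinhc (S n) - 1 - (S n)^2 / 6)‖
        = (n:ℝ)^2 * |mySinhc (S n) - 1 - (S n)^2 / 6| := by
          rw [Real.norm_eq_abs, abs_mul, _root_.abs_pow, Nat.abs_cast]
      _ ≤ (n:ℝ)^2 * |S n| ^ 3 := by gcongr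
      _ = ((n:ℝ) * S n) * ((n:ℝ) * S n) * |S n| := by
          rw [show |S n| ^ 3 = (S n)^2 * |S n| by rw [← _root_.sq_abs]; ring]
          ring
  have hA : Tendsto (fun n : ℕ => (n:ℝ)^2 * ((1/2) * mySinhc (S n) - 1/2)) atTop
      (nhds (ζ^2 / (3 * Real.pi^2))) := by
    have h6 : Tendsto (fun n : ℕ => ((n:ℝ) * S n) * ((n:ℝ) * S n) / 6) atTop
        (nhds ((-2 * ζ / Real.pi) * (-2 * ζ / Real.pi) / 6)) := (hS1.mul hS1).div_const 6
    have hsum := (hE.add h6).const_mul (1/2 : ℝ)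
    have hval : (1/2:ℝ) * (0 + (-2 * ζ / Real.pi) * (-2 * ζ / Real.pi) / 6)
        = ζ^2 / (3 * Real.pi^2) := by
      field_simp
      try ring
      try tauto
    rw [hval] at hsum
    refine hsum.congr fun n => ?_
    ring
  -- part B
  have hsin : Tendsto (fun n : ℕ => (n:ℝ) * Real.sin (R n)) atTop (nhds (2 * η / Real.pi)) := by
    have herr : Tendsto (fun n : ℕ => (n:ℝ) * (Real.sin (R n) - R n)) atTop (nhds 0) := by
      have hg : Tendsto (fun n : ℕ => |(n:ℝ) * R n| * (|R n| * |R n|)) atTop (nhds 0) := by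
        have := hR1.abs.mul (hR0.abs.mul hR0.abs)
        simpa using this
      apply squeeze_zero_norm' ?_ hg
      filter_upwards [hRsmall] with n h
      have hb := sin_taylor1 h
      calc ‖(n:ℝ) * (Real.sin (R n) - R n)‖
          = (n:ℝ) * |Real.sin (R n) - R n| := by
            rw [Real.norm_eq_abs, abs_mul, Nat.abs_cast]
        _ ≤ (n:ℝ) * |R n| ^ 3 := by gcongr
        _ = |(n:ℝ) * R n| * (|R n| * |R n|) := by
            rw [abs_mul, Nat.abs_cast]
            ring
    have := herr.add hR1
    rw [zero_add] at this
    refine this.congr fun n => ?_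
    ring
  have hfrac : Tendsto (fun n : ℕ => (n:ℝ) / ((n:ℝ) * Real.pi + R n)) atTop
      (nhds (1 / Real.pi)) := by
    have hden : Tendsto (fun n : ℕ => Real.pi + R n * (1/(n:ℝ))) atTop (nhds Real.pi) := by
      have h0 := hR0.mul tendsto_one_div_atTop_nhds_zero_nat
      have := (tendsto_const_nhds (x := Real.pi) (f := (atTop : Filter ℕ))).add h0
      simpa using this
    have hinv := hden.inv₀ Real.pi_ne_zero
    rw [← one_div] at hinv
    refine Tendsto.congr' ?_ hinv
    filter_upwards [eventually_ge_atTop 1, hRsmall] with n hn h1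
    have hn1 : (1:ℝ) ≤ (n:ℝ) := by exact_mod_cast hn
    have hn0 : (n:ℝ) ≠ 0 := by linarith
    have hd0 : (n:ℝ) * Real.pi + R n ≠ 0 := by
      have h2 := abs_le.mp h1
      nlinarith
    have he : Real.pi + R n * (1/(n:ℝ)) = ((n:ℝ) * Real.pi + R n) / (n:ℝ) := by
      field_simp
      try ring
    rw [he, inv_div]
  have hB : Tendsto (fun n : ℕ => (n:ℝ)^2 * ((1/2) * (-1:ℝ)^n * mySinc ((n:ℝ) * Real.pi + R n)))
      atTop (nhds (η / Real.pi^2)) := by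
    have hmain := (hsin.mul hfrac).const_mul (1/2 : ℝ)
    have hval : (1/2:ℝ) * (2 * η / Real.pi * (1 / Real.pi)) = η / Real.pi^2 := by
      field_simp
      try ring
      try tauto
    rw [hval] at hmain
    refine Tendsto.congr' ?_ hmain
    filter_upwards [eventually_ge_atTop 1, hRsmall] with n hn h1
    have hn1 : (1:ℝ) ≤ (n:ℝ) := by exact_mod_cast hn
    have h2 := abs_le.mp h1
    have hd0 : (n:ℝ) * Real.pi + R n ≠ 0 := by nlinarith
    have hms : mySinc ((n:ℝ) * Real.pi + R n)
        = (-1:ℝ)^n * Real.sin (R n) / ((n:ℝ) * Real.pi + R n) := by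
      rw [mySinc, if_neg hd0]
      congr 1
      rw [Real.sin_add, Real.sin_nat_mul_pi, zero_mul, zero_add]
      have hcos : Real.cos ((n:ℝ) * Real.pi) = (-1:ℝ)^n := by
        have := Real.cos_nat_mul_pi_sub 0 n
        simpa using this
      rw [hcos]
    have h11 : (-1:ℝ)^n * (-1:ℝ)^n = 1 := by
      rw [← pow_add]
      exact Even.neg_one_pow ⟨n, rfl⟩
    have hms2 : (-1:ℝ)^n * mySinc ((n:ℝ) * Real.pi + R n)
        = Real.sin (R n) / ((n:ℝ) * Real.pi + R n) := by
      rw [hms, ← mul_div_assoc, ← mul_assoc, h11, one_mul]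
    rw [mul_assoc (1/2:ℝ) ((-1:ℝ)^n), hms2]
    field_simp
  -- final assembly
  refine (isLittleO_iff_tendsto' ?_).mpr ?_
  · filter_upwards [eventually_ge_atTop 1] with n hn h
    exfalso
    have hn1 : (1:ℝ) ≤ (n:ℝ) := by exact_mod_cast hn
    have : ((n:ℝ)^2) ≠ 0 := by positivity
    rw [div_eq_zero_iff] at h
    rcases h with h | h
    · exact one_ne_zero h
    · exact this h
  · have hcomb := (hA.add hB).sub
      (tendsto_const_nhds (x := ζ^2 / (3 * Real.pi^2) + η / Real.pi^2) (f := (atTop : Filter ℕ)))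
    rw [sub_self] at hcomb
    refine Tendsto.congr' ?_ hcomb
    filter_upwards [eventually_ge_atTop 1] with n hn
    rw [hint n]
    have hn1 : (1:ℝ) ≤ (n:ℝ) := by exact_mod_cast hn
    have hn0 : (n:ℝ) ≠ 0 := by linarith
    have hπ0 : Real.pi ≠ 0 := Real.pi_ne_zero
    field_simp
    ring
end
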